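/- Let P* be an order-preserving semiflow on 𝒫₂(ℝ) (jointly continuous, P*₀ = id, P*ₜ∘P*ₛ = P*_{t+s}, and μ ≤_st ν implies P*ₜμ ≤_st P*ₜν). Suppose there exists an eventually positively invariant, order bounded, closed set K ⊂ 𝒫₂(ℝ) attracting every bounded subset of 𝒫₂(ℝ). Then ω(K) = ⋂_{t≥0} P*ₜK is the global attractor, and there exist invariant measures ν̲ = inf_{≤_st} ω(K) and ν̄ = sup_{≤_st} ω(K), both belonging to ω(K), such that ω(K) ⊆ [ν̲, ν̄]. -/

import Mathlib

open MeasureTheory Filter Set ENNReal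

noncomputable section

/-- The stochastic order on measures on ℝ: `μ ≤_st ν` iff `∫ f dμ ≤ ∫ f dν`
for every bounded increasing function `f : ℝ → ℝ`. -/
def StOrder (μ ν : Measure ℝ) : Prop :=
  ∀ f : ℝ → ℝ, Monotone f → (∃ C : ℝ, ∀ x, |f x| ≤ C) →
    ∫ x, f x ∂μ ≤ ∫ x, f x ∂ν

/-- `𝒫₂(ℝ)`: probability measures on ℝ with finite second moment. -/
def P2 : Set (Measure ℝ) :=
  {μ | IsProbabilityMeasure μ ∧ Integrable (fun x : ℝ => x ^ 2) μ}

/-- The `p`-Wasserstein distance (ENNReal-valued), as an infimum over couplings. -/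
def Wp (p : ℝ) (μ ν : Measure ℝ) : ℝ≥0∞ :=
  ⨅ (π : Measure (ℝ × ℝ)) (_ : π.map Prod.fst = μ) (_ : π.map Prod.snd = ν),
    (∫⁻ q, ENNReal.ofReal (|q.1 - q.2| ^ p) ∂π) ^ (1 / p)

/-- The 2-Wasserstein distance. -/
def W2 (μ ν : Measure ℝ) : ℝ≥0∞ := Wp 2 μ ν

/-- Convergence of a sequence of measures in the 2-Wasserstein distance. -/
def W2Tendsto (μs : ℕ → Measure ℝ) (μ : Measure ℝ) : Prop :=
  Tendsto (fun n => W2 (μs n) μ) atTop (nhds 0)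

/-- `P` is a (jointly sequentially continuous) semiflow on `𝒫₂(ℝ)`. -/
def Semiflow (P : ℝ → Measure ℝ → Measure ℝ) : Prop :=
  (∀ t : ℝ, 0 ≤ t → ∀ μ ∈ P2, P t μ ∈ P2) ∧
  (∀ μ ∈ P2, P 0 μ = μ) ∧
  (∀ t s : ℝ, 0 ≤ t → 0 ≤ s → ∀ μ ∈ P2, P t (P s μ) = P (t + s) μ) ∧
  (∀ (ts : ℕ → ℝ) (t : ℝ) (μs : ℕ → Measure ℝ) (μ : Measure ℝ),
    (∀ n, 0 ≤ ts n) → 0 ≤ t → Tendsto ts atTop (nhds t) →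
    (∀ n, μs n ∈ P2) → μ ∈ P2 → W2Tendsto μs μ →
    Tendsto (fun n => W2 (P (ts n) (μs n)) (P t μ)) atTop (nhds 0))

/-- `P` preserves the stochastic order on `𝒫₂(ℝ)`. -/
def OrderPreserving (P : ℝ → Measure ℝ → Measure ℝ) : Prop :=
  ∀ t : ℝ, 0 ≤ t → ∀ μ ν : Measure ℝ, μ ∈ P2 → ν ∈ P2 →
    StOrder μ ν → StOrder (P t μ) (P t ν)

/-- `K` attracts `B`: `𝒲₂(P*ₜ B, K) → 0` as `t → ∞`. -/
def Attracts (P : ℝ → Measure ℝ → Measure ℝ) (K B : Set (Measure ℝ)) : Prop :=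
  Tendsto (fun t : ℝ => ⨆ μ ∈ B, ⨅ ν ∈ K, W2 (P t μ) ν) atTop (nhds 0)

/-- A bounded subset of the 2-Wasserstein space. -/
def BoundedSet (B : Set (Measure ℝ)) : Prop :=
  ∃ R : ℝ≥0∞, R < ⊤ ∧ ∀ μ ∈ B, W2 μ (Measure.dirac 0) ≤ R

/-- `ν` is an invariant measure of `P`. -/
def Invariant (P : ℝ → Measure ℝ → Measure ℝ) (ν : Measure ℝ) : Prop :=
  ∀ t : ℝ, 0 ≤ t → P t ν = ν

/-- `A` is an invariant set of `P`. -/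
def InvariantSet (P : ℝ → Measure ℝ → Measure ℝ) (A : Set (Measure ℝ)) : Prop :=
  ∀ t : ℝ, 0 ≤ t → P t '' A = A

/-- The ω-limit set of `B` (sequential characterization). -/
def OmegaLimit (P : ℝ → Measure ℝ → Measure ℝ) (B : Set (Measure ℝ)) :
    Set (Measure ℝ) :=
  {ν | ν ∈ P2 ∧ ∃ (ts : ℕ → ℝ) (μs : ℕ → Measure ℝ),
    (∀ n, μs n ∈ B) ∧ Tendsto ts atTop atTop ∧
    Tendsto (fun n => W2 (P (ts n) (μs n)) ν) atTop (nhds 0)}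

/-- Sequential compactness of a set of measures in the 2-Wasserstein distance. -/
def SeqCompact (A : Set (Measure ℝ)) : Prop :=
  ∀ ρ : ℕ → Measure ℝ, (∀ n, ρ n ∈ A) →
    ∃ (φ : ℕ → ℕ) (ν : Measure ℝ), StrictMono φ ∧ ν ∈ A ∧
      W2Tendsto (fun n => ρ (φ n)) ν


namespace GA
open ProbabilityTheory


/-- Lebesgue measure restricted to (0,1). -/
def vol01 : Measure ℝ := volume.restrict (Ioo 0 1)

instance : IsProbabilityMeasure vol01 := by
  constructor
  rw [vol01, Measure.restrict_apply MeasurableSet.univ, Set.univ_inter, Real.volume_Ioo]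
  norm_num

lemma vol01_ae_mem : ∀ᵐ u ∂vol01, u ∈ Ioo (0:ℝ) 1 := by
  rw [vol01]; exact ae_restrict_mem measurableSet_Ioo

/-- Quantile function (generalized inverse cdf). -/
def quant (μ : Measure ℝ) (u : ℝ) : ℝ := sInf {x | u ≤ cdf μ x}

variable {μ ν : Measure ℝ}

lemma quant_set_nonempty [IsProbabilityMeasure μ] {u : ℝ} (hu : u < 1) :
    {x | u ≤ cdf μ x}.Nonempty := by
  have h : ∀ᶠ x in atTop, u < cdf μ x :=
    (tendsto_cdf_atTop μ).eventually (eventually_gt_nhds hu)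
  rcases h.exists with ⟨x, hx⟩
  exact ⟨x, hx.le⟩

lemma quant_set_bddBelow [IsProbabilityMeasure μ] {u : ℝ} (hu : 0 < u) :
    BddBelow {x | u ≤ cdf μ x} := by
  have h : ∀ᶠ x in atBot, cdf μ x < u :=
    (tendsto_cdf_atBot μ).eventually (eventually_lt_nhds hu)
  rcases h.exists with ⟨x₀, hx₀⟩
  refine ⟨x₀, fun y hy => ?_⟩
  by_contra hcon
  push_neg at hcon
  exact absurd (le_trans hy ((cdf μ).mono hcon.le)) (not_le.mpr hx₀)

/-- Key: `quant μ u ≤ x ↔ u ≤ cdf μ x` for `u ∈ (0,1)`. -/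
lemma quant_le_iff [IsProbabilityMeasure μ] {u x : ℝ} (hu0 : 0 < u) (hu1 : u < 1) :
    quant μ u ≤ x ↔ u ≤ cdf μ x := by
  constructor
  · intro h
    have hev : ∀ y, x < y → u ≤ cdf μ y := by
      intro y hy
      have hlt : sInf {x | u ≤ cdf μ x} < y := lt_of_le_of_lt h hy
      rcases (csInf_lt_iff (quant_set_bddBelow hu0) (quant_set_nonempty hu1)).mp hlt with
        ⟨z, hz, hzy⟩
      exact le_trans hz ((cdf μ).mono hzy.le)
    have hrc : ContinuousWithinAt (cdf μ) (Ici x) x := (cdf μ).right_continuous x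
    have hrc' : Tendsto (cdf μ) (nhdsWithin x (Ioi x)) (nhds (cdf μ x)) :=
      hrc.tendsto.mono_left (nhdsWithin_mono x Ioi_subset_Ici_self)
    exact ge_of_tendsto hrc' (eventually_nhdsWithin_of_forall (fun y hy => hev y hy))
  · intro h
    exact csInf_le (quant_set_bddBelow hu0) h

lemma quant_monoOn [IsProbabilityMeasure μ] {u v : ℝ} (hu0 : 0 < u) (hv1 : v < 1)
    (huv : u ≤ v) : quant μ u ≤ quant μ v := by
  have hu1 : u < 1 := lt_of_le_of_lt huv hv1
  have hv0 : 0 < v := lt_of_lt_of_le hu0 huv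
  rw [quant_le_iff hu0 hu1]
  exact le_trans huv ((quant_le_iff hv0 hv1).mp le_rfl)

/-- Comparison of quantiles from comparison of cdfs. -/
lemma quant_le_quant [IsProbabilityMeasure μ] [IsProbabilityMeasure ν]
    (h : ∀ x, cdf ν x ≤ cdf μ x) {u : ℝ} (hu0 : 0 < u) (hu1 : u < 1) :
    quant μ u ≤ quant ν u := by
  rw [quant_le_iff hu0 hu1]
  exact le_trans ((quant_le_iff hu0 hu1).mp le_rfl) (h _)

/-- A measurable representative of `quant μ`. -/
def quantM (μ : Measure ℝ) : ℝ → ℝ := fun u => if u ∈ Ioo (0:ℝ) 1 then quant μ u else 0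

lemma measurable_quantM [IsProbabilityMeasure μ] : Measurable (quantM μ) := by
  apply measurable_of_Iic
  intro x
  have : quantM μ ⁻¹' Iic x =
      (Ioo (0:ℝ) 1 ∩ Iic (cdf μ x)) ∪ ((Ioo (0:ℝ) 1)ᶜ ∩ (if (0:ℝ) ≤ x then univ else ∅)) := by
    ext u
    by_cases hu : u ∈ Ioo (0:ℝ) 1
    · simp only [mem_preimage, mem_Iic, quantM, if_pos hu, mem_union, mem_inter_iff, hu,
        true_and, mem_compl_iff, not_true, false_and, or_false]
      exact quant_le_iff hu.1 hu.2
    · simp only [mem_preimage, mem_Iic, quantM, if_neg hu, mem_union, mem_inter_iff, hu,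
        false_and, false_or, mem_compl_iff, not_false_iff, true_and]
      by_cases hx : (0:ℝ) ≤ x <;> simp [hx]
  rw [this]
  refine (measurableSet_Ioo.inter measurableSet_Iic).union
    (measurableSet_Ioo.compl.inter ?_)
  by_cases hx : (0:ℝ) ≤ x <;> simp [hx]

lemma quant_ae_eq_quantM [IsProbabilityMeasure μ] : quant μ =ᵐ[vol01] quantM μ := by
  filter_upwards [vol01_ae_mem] with u hu
  simp [quantM, hu]

lemma aemeasurable_quant [IsProbabilityMeasure μ] : AEMeasurable (quant μ) vol01 :=
  ⟨quantM μ, measurable_quantM, quant_ae_eq_quantM⟩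

/-- Inverse transform sampling: the quantile pushes `vol01` to `μ`. -/
lemma map_quantM [IsProbabilityMeasure μ] : vol01.map (quantM μ) = μ := by
  have hmap : IsProbabilityMeasure (vol01.map (quantM μ)) :=
    Measure.isProbabilityMeasure_map measurable_quantM.aemeasurable
  refine Measure.ext_of_Iic _ _ (fun x => ?_)
  rw [Measure.map_apply measurable_quantM measurableSet_Iic, vol01,
    Measure.restrict_apply (measurable_quantM measurableSet_Iic)]
  have hset : quantM μ ⁻¹' Iic x ∩ Ioo (0:ℝ) 1 = Iic (cdf μ x) ∩ Ioo 0 1 := by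
    ext u
    simp only [mem_inter_iff, mem_preimage, mem_Iic, and_congr_left_iff]
    intro hu
    rw [quantM, if_pos hu]
    exact quant_le_iff hu.1 hu.2
  rw [hset]
  have h0 : 0 ≤ cdf μ x := cdf_nonneg μ x
  have h1 : cdf μ x ≤ 1 := cdf_le_one μ x
  rcases lt_or_eq_of_le h1 with h1' | h1'
  · have : Iic (cdf μ x) ∩ Ioo (0:ℝ) 1 = Ioc 0 (cdf μ x) := by
      ext u
      simp only [mem_inter_iff, mem_Ioo, mem_Iic, mem_Ioc]
      constructor
      · rintro ⟨h4, h2, _⟩; exact ⟨h2, h4⟩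
      · rintro ⟨h2, h3⟩; exact ⟨h3, h2, lt_of_le_of_lt h3 h1'⟩
    rw [this, Real.volume_Ioc, sub_zero, ← ofReal_cdf μ x]
  · have : Iic (cdf μ x) ∩ Ioo (0:ℝ) 1 = Ioo 0 1 := by
      rw [inter_eq_right]
      intro u hu
      rw [mem_Iic, h1']
      exact hu.2.le
    rw [this, Real.volume_Ioo, ← ofReal_cdf μ x, h1']
    norm_num

lemma map_quant [IsProbabilityMeasure μ] : vol01.map (quant μ) = μ := by
  rw [Measure.map_congr quant_ae_eq_quantM, map_quantM]




variable {μ ν ρ a b : Measure ℝ}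

/-- "μ ≤st ν" at the level of cdfs. -/
def CdfLE (μ ν : Measure ℝ) : Prop := ∀ x, cdf ν x ≤ cdf μ x

lemma quantM_le_quantM [IsProbabilityMeasure μ] [IsProbabilityMeasure ν]
    (h : CdfLE μ ν) {u : ℝ} (hu : u ∈ Ioo (0:ℝ) 1) : quantM μ u ≤ quantM ν u := by
  rw [quantM, quantM, if_pos hu, if_pos hu]
  exact quant_le_quant h hu.1 hu.2

lemma lintegral_quantM [IsProbabilityMeasure μ] {f : ℝ → ℝ≥0∞} (hf : Measurable f) :
    ∫⁻ u, f (quantM μ u) ∂vol01 = ∫⁻ x, f x ∂μ := by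
  rw [← lintegral_map hf measurable_quantM, map_quantM]

lemma integral_quantM [IsProbabilityMeasure μ] {f : ℝ → ℝ} (hf : Measurable f) :
    ∫ u, f (quantM μ u) ∂vol01 = ∫ x, f x ∂μ := by
  rw [← integral_map measurable_quantM.aemeasurable hf.aestronglyMeasurable, map_quantM]

/-- CdfLE implies the stochastic order (via the monotone quantile coupling). -/
lemma stOrder_of_cdfLE [IsProbabilityMeasure μ] [IsProbabilityMeasure ν]
    (h : CdfLE μ ν) : StOrder μ ν := by
  intro f hf hC
  rcases hC with ⟨C, hC⟩
  rw [← integral_quantM (μ := μ) hf.measurable, ← integral_quantM (μ := ν) hf.measurable]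
  have hint : ∀ (ξ : Measure ℝ) [IsProbabilityMeasure ξ], Integrable (fun u => f (quantM ξ u)) vol01 := by
    intro ξ _
    refine ⟨(hf.measurable.comp measurable_quantM).aestronglyMeasurable, ?_⟩
    exact HasFiniteIntegral.of_bounded (C := C)
      (Filter.Eventually.of_forall (fun u => by rw [Real.norm_eq_abs]; exact hC _))
  refine integral_mono_ae (hint μ) (hint ν) ?_
  filter_upwards [vol01_ae_mem] with u hu
  exact hf (quantM_le_quantM h hu)

/-- The stochastic order implies CdfLE. -/
lemma cdfLE_of_stOrder [IsProbabilityMeasure μ] [IsProbabilityMeasure ν]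
    (h : StOrder μ ν) : CdfLE μ ν := by
  intro x
  have hmono : Monotone ((Ioi x).indicator (fun _ => (1:ℝ))) := by
    intro s t hst
    by_cases hs : s ∈ Ioi x
    · rw [indicator_of_mem hs, indicator_of_mem (mem_Ioi.mpr (lt_of_lt_of_le (mem_Ioi.mp hs) hst))]
    · rw [indicator_of_notMem hs]
      by_cases ht : t ∈ Ioi x
      · rw [indicator_of_mem ht]; norm_num
      · rw [indicator_of_notMem ht]
  have hbd : ∃ C : ℝ, ∀ y, |(Ioi x).indicator (fun _ => (1:ℝ)) y| ≤ C := by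
    refine ⟨1, fun y => ?_⟩
    by_cases hy : y ∈ Ioi x
    · rw [indicator_of_mem hy]; norm_num
    · rw [indicator_of_notMem hy]; norm_num
  have hI := h _ hmono hbd
  rw [integral_indicator_const (1:ℝ) measurableSet_Ioi,
    integral_indicator_const (1:ℝ) measurableSet_Ioi] at hI
  simp only [smul_eq_mul, mul_one] at hI
  have hIoi : μ (Ioi x) ≤ ν (Ioi x) :=
    (ENNReal.toReal_le_toReal (measure_ne_top μ _) (measure_ne_top ν _)).mp hI
  have h1 : μ (Iic x) = 1 - μ (Ioi x) := by
    rw [← Set.compl_Ioi, prob_compl_eq_one_sub measurableSet_Ioi]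
  have h2 : ν (Iic x) = 1 - ν (Ioi x) := by
    rw [← Set.compl_Ioi, prob_compl_eq_one_sub measurableSet_Ioi]
  have hle : ν (Iic x) ≤ μ (Iic x) := by
    rw [h1, h2]
    exact tsub_le_tsub_left hIoi 1
  rw [cdf_eq_real, cdf_eq_real, measureReal_def, measureReal_def]
  exact ENNReal.toReal_le_toReal (measure_ne_top ν _) (measure_ne_top μ _) |>.mpr hle

lemma stOrder_refl : StOrder μ μ := fun _ _ _ => le_rfl

lemma stOrder_antisymm [IsProbabilityMeasure μ] [IsProbabilityMeasure ν]
    (h1 : StOrder μ ν) (h2 : StOrder ν μ) : μ = ν := by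
  have e1 := cdfLE_of_stOrder h1
  have e2 := cdfLE_of_stOrder h2
  refine Measure.ext_of_Iic μ ν (fun x => ?_)
  rw [← ofReal_cdf μ x, ← ofReal_cdf ν x]
  exact congrArg _ (le_antisymm (e2 x) (e1 x))

/-- second moment via quantiles -/
lemma lintegral_sq_quantM [IsProbabilityMeasure μ] :
    ∫⁻ u, ENNReal.ofReal ((quantM μ u)^2) ∂vol01 = ∫⁻ x, ENNReal.ofReal (x^2) ∂μ :=
  lintegral_quantM ((measurable_id.pow_const 2).ennreal_ofReal)

lemma integrable_sq_iff [IsProbabilityMeasure μ] :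
    Integrable (fun x : ℝ => x ^ 2) μ ↔ ∫⁻ x, ENNReal.ofReal (x^2) ∂μ ≠ ⊤ := by
  rw [show Integrable (fun x : ℝ => x ^ 2) μ ↔ _ ∧ _ from Iff.rfl]
  constructor
  · rintro ⟨-, hfin⟩
    rw [hasFiniteIntegral_iff_ofReal (Filter.Eventually.of_forall (fun x => sq_nonneg x))] at hfin
    exact hfin.ne
  · intro h
    refine ⟨(measurable_id.pow_const 2).aestronglyMeasurable, ?_⟩
    rw [hasFiniteIntegral_iff_ofReal (Filter.Eventually.of_forall (fun x => sq_nonneg x))]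
    exact lt_top_iff_ne_top.mpr h

/-- Second moment bound under stochastic sandwiching. -/
lemma lintegral_sq_le_of_sandwich [IsProbabilityMeasure a] [IsProbabilityMeasure b]
    [IsProbabilityMeasure μ] (ha : CdfLE a μ) (hb : CdfLE μ b) :
    ∫⁻ x, ENNReal.ofReal (x^2) ∂μ ≤
      2 * ∫⁻ x, ENNReal.ofReal (x^2) ∂a + 2 * ∫⁻ x, ENNReal.ofReal (x^2) ∂b := by
  rw [← lintegral_sq_quantM (μ := μ), ← lintegral_sq_quantM (μ := a), ← lintegral_sq_quantM (μ := b)]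
  have hpt : ∀ᵐ u ∂vol01, ENNReal.ofReal ((quantM μ u)^2) ≤
      2 * ENNReal.ofReal ((quantM a u)^2) + 2 * ENNReal.ofReal ((quantM b u)^2) := by
    filter_upwards [vol01_ae_mem] with u hu
    have h1 : quantM a u ≤ quantM μ u := quantM_le_quantM ha hu
    have h2 : quantM μ u ≤ quantM b u := quantM_le_quantM hb hu
    have habs : |quantM μ u| ≤ |quantM a u| + |quantM b u| := by
      rw [abs_le]
      constructor
      · calc -(|quantM a u| + |quantM b u|) ≤ -|quantM a u| := by
              simp [abs_nonneg]
          _ ≤ quantM a u := neg_abs_le _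
          _ ≤ quantM μ u := h1
      · exact le_trans h2 (le_trans (le_abs_self _) (le_add_of_nonneg_left (abs_nonneg _)))
    have hsq : (quantM μ u)^2 ≤ 2*(quantM a u)^2 + 2*(quantM b u)^2 := by
      have h3 : (quantM μ u)^2 = |quantM μ u|^2 := (sq_abs _).symm
      have h4 : |quantM μ u|^2 ≤ (|quantM a u| + |quantM b u|)^2 := by
        apply pow_le_pow_left₀ (abs_nonneg _) habs
      nlinarith [sq_abs (quantM a u), sq_abs (quantM b u), sq_nonneg (|quantM a u| - |quantM b u|)]
    calc ENNReal.ofReal ((quantM μ u)^2) ≤ ENNReal.ofReal (2*(quantM a u)^2 + 2*(quantM b u)^2) :=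
          ENNReal.ofReal_le_ofReal hsq
      _ = 2 * ENNReal.ofReal ((quantM a u)^2) + 2 * ENNReal.ofReal ((quantM b u)^2) := by
          rw [ENNReal.ofReal_add (by positivity) (by positivity), ENNReal.ofReal_mul (by norm_num),
            ENNReal.ofReal_mul (by norm_num)]
          norm_num
  calc ∫⁻ u, ENNReal.ofReal ((quantM μ u)^2) ∂vol01
      ≤ ∫⁻ u, (2 * ENNReal.ofReal ((quantM a u)^2) + 2 * ENNReal.ofReal ((quantM b u)^2)) ∂vol01 :=
        lintegral_mono_ae hpt
    _ = 2 * ∫⁻ u, ENNReal.ofReal ((quantM a u)^2) ∂vol01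
        + 2 * ∫⁻ u, ENNReal.ofReal ((quantM b u)^2) ∂vol01 := by
        rw [lintegral_add_left, lintegral_const_mul, lintegral_const_mul]
        · exact (measurable_quantM.pow_const 2).ennreal_ofReal
        · exact (measurable_quantM.pow_const 2).ennreal_ofReal
        · exact ((measurable_quantM.pow_const 2).ennreal_ofReal).const_mul 2

-- ### W2 basics

lemma rpow_two_abs (x : ℝ) : |x| ^ (2:ℝ) = x^2 := by
  rw [show (2:ℝ) = ((2:ℕ):ℝ) by norm_num, Real.rpow_natCast, sq_abs]

/-- cost of a coupling -/
def cost (π : Measure (ℝ × ℝ)) : ℝ≥0∞ := ∫⁻ q, ENNReal.ofReal ((q.1 - q.2)^2) ∂π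

lemma W2_eq_iInf_cost : W2 μ ν =
    ⨅ (π : Measure (ℝ × ℝ)) (_ : π.map Prod.fst = μ) (_ : π.map Prod.snd = ν),
      (cost π) ^ (1/2 : ℝ) := by
  rw [W2, Wp]
  have hc : ∀ π : Measure (ℝ × ℝ),
      (∫⁻ q, ENNReal.ofReal (|q.1 - q.2| ^ (2:ℝ)) ∂π) = cost π :=
    fun π => lintegral_congr (fun q => by rw [rpow_two_abs])
  simp only [hc]

lemma measurable_cost_integrand : Measurable (fun q : ℝ × ℝ => ENNReal.ofReal ((q.1 - q.2)^2)) :=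
  (((measurable_fst.sub measurable_snd).pow_const 2).ennreal_ofReal)

lemma W2_le_coupling {π : Measure (ℝ × ℝ)} (h1 : π.map Prod.fst = μ)
    (h2 : π.map Prod.snd = ν) : W2 μ ν ≤ (cost π) ^ (1/2 : ℝ) := by
  rw [W2_eq_iInf_cost]
  exact iInf_le_of_le π (iInf_le_of_le h1 (iInf_le_of_le h2 le_rfl))

lemma le_W2 {c : ℝ≥0∞} (h : ∀ π : Measure (ℝ × ℝ), π.map Prod.fst = μ →
    π.map Prod.snd = ν → c ≤ (cost π) ^ (1/2 : ℝ)) : c ≤ W2 μ ν := by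
  rw [W2_eq_iInf_cost]
  exact le_iInf (fun π => le_iInf (fun h1 => le_iInf (fun h2 => h π h1 h2)))

lemma exists_coupling_of_W2_lt {c : ℝ≥0∞} (h : W2 μ ν < c) :
    ∃ π : Measure (ℝ × ℝ), π.map Prod.fst = μ ∧ π.map Prod.snd = ν ∧
      (cost π) ^ (1/2 : ℝ) < c := by
  rw [W2_eq_iInf_cost] at h
  rcases iInf_lt_iff.mp h with ⟨π, hπ⟩
  rcases iInf_lt_iff.mp hπ with ⟨h1, hπ'⟩
  rcases iInf_lt_iff.mp hπ' with ⟨h2, hπ''⟩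
  exact ⟨π, h1, h2, hπ''⟩

lemma W2_self [IsProbabilityMeasure μ] : W2 μ μ = 0 := by
  refine le_antisymm ?_ (zero_le)
  have hdiag : Measurable (fun x : ℝ => (x, x)) := measurable_id.prodMk measurable_id
  have h := W2_le_coupling (μ := μ) (ν := μ) (π := μ.map (fun x => (x, x)))
    (by rw [Measure.map_map measurable_fst hdiag]; exact Measure.map_id)
    (by rw [Measure.map_map measurable_snd hdiag]; exact Measure.map_id)
  have hc : cost (μ.map (fun x : ℝ => (x, x))) = 0 := by
    rw [cost, lintegral_map measurable_cost_integrand hdiag]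
    simp
  rw [hc] at h
  simpa [ENNReal.zero_rpow_of_pos] using h

lemma cost_map_swap (π : Measure (ℝ × ℝ)) :
    cost (π.map Prod.swap) = cost π := by
  rw [cost, cost, lintegral_map measurable_cost_integrand measurable_swap]
  exact lintegral_congr (fun q => by rw [Prod.fst_swap, Prod.snd_swap]; ring_nf)

lemma W2_symm : W2 μ ν = W2 ν μ := by
  have key : ∀ (α β : Measure ℝ), W2 α β ≤ W2 β α := by
    intro α β
    refine le_W2 (fun π h1 h2 => ?_)
    have hs1 : (π.map Prod.swap).map Prod.fst = α := by
      rw [Measure.map_map measurable_fst measurable_swap]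
      exact h2
    have hs2 : (π.map Prod.swap).map Prod.snd = β := by
      rw [Measure.map_map measurable_snd measurable_swap]
      exact h1
    have := W2_le_coupling hs1 hs2
    rwa [cost_map_swap] at this
  exact le_antisymm (key μ ν) (key ν μ)

/-- quantile L² distance -/
def qd (μ ν : Measure ℝ) : ℝ≥0∞ :=
  (∫⁻ u, ENNReal.ofReal ((quantM μ u - quantM ν u)^2) ∂vol01) ^ (1/2 : ℝ)

lemma W2_le_qd [IsProbabilityMeasure μ] [IsProbabilityMeasure ν] : W2 μ ν ≤ qd μ ν := by
  have hm : Measurable (fun u => (quantM μ u, quantM ν u)) :=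
    measurable_quantM.prodMk measurable_quantM
  have h1 : (vol01.map (fun u => (quantM μ u, quantM ν u))).map Prod.fst = μ := by
    rw [Measure.map_map measurable_fst hm]
    exact map_quantM
  have h2 : (vol01.map (fun u => (quantM μ u, quantM ν u))).map Prod.snd = ν := by
    rw [Measure.map_map measurable_snd hm]
    exact map_quantM
  have h := W2_le_coupling h1 h2
  rwa [cost, lintegral_map measurable_cost_integrand hm] at h

lemma qd_triangle [IsProbabilityMeasure μ] [IsProbabilityMeasure ν] [IsProbabilityMeasure ρ] :
    qd μ ρ ≤ qd μ ν + qd ν ρ := by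
  set f : ℝ → ℝ≥0∞ := fun u => ENNReal.ofReal |quantM μ u - quantM ν u| with hf
  set g : ℝ → ℝ≥0∞ := fun u => ENNReal.ofReal |quantM ν u - quantM ρ u| with hg
  have hsq : ∀ (s t : ℝ), ENNReal.ofReal ((s - t)^2) = (ENNReal.ofReal |s - t|) ^ (2:ℝ) := by
    intro s t
    rw [ENNReal.ofReal_rpow_of_nonneg (abs_nonneg _) (by norm_num), rpow_two_abs]
  have hmono : (∫⁻ u, ENNReal.ofReal ((quantM μ u - quantM ρ u)^2) ∂vol01) ^ (1/2 : ℝ) ≤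
      (∫⁻ u, ((f + g) u) ^ (2:ℝ) ∂vol01) ^ (1/2 : ℝ) := by
    apply ENNReal.rpow_le_rpow _ (by norm_num)
    apply lintegral_mono
    intro u
    show ENNReal.ofReal ((quantM μ u - quantM ρ u)^2) ≤ ((f + g) u) ^ (2:ℝ)
    rw [hsq (quantM μ u) (quantM ρ u)]
    apply ENNReal.rpow_le_rpow _ (by norm_num)
    have : (f + g) u = ENNReal.ofReal (|quantM μ u - quantM ν u| + |quantM ν u - quantM ρ u|) := by
      simp only [Pi.add_apply, hf, hg]
      rw [ENNReal.ofReal_add (abs_nonneg _) (abs_nonneg _)]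
    rw [this]
    exact ENNReal.ofReal_le_ofReal (abs_sub_le _ _ _)
  have hfm : AEMeasurable f vol01 :=
    ((measurable_quantM.sub measurable_quantM).abs.ennreal_ofReal).aemeasurable
  have hgm : AEMeasurable g vol01 :=
    ((measurable_quantM.sub measurable_quantM).abs.ennreal_ofReal).aemeasurable
  have hmink := ENNReal.lintegral_Lp_add_le hfm hgm (by norm_num : (1:ℝ) ≤ 2)
  rw [qd, qd, qd]
  calc (∫⁻ u, ENNReal.ofReal ((quantM μ u - quantM ρ u)^2) ∂vol01) ^ (1/2 : ℝ)
      ≤ (∫⁻ u, ((f + g) u) ^ (2:ℝ) ∂vol01) ^ (1/2 : ℝ) := hmono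
    _ ≤ (∫⁻ u, f u ^ (2:ℝ) ∂vol01) ^ (1/(2:ℝ)) + (∫⁻ u, g u ^ (2:ℝ) ∂vol01) ^ (1/(2:ℝ)) := hmink
    _ = _ := by
        congr 1
        · congr 1
          exact lintegral_congr (fun u => by rw [hsq])
        · congr 1
          exact lintegral_congr (fun u => by rw [hsq])

lemma W2_dirac_bound [IsProbabilityMeasure μ] :
    W2 μ (Measure.dirac 0) ≤ (∫⁻ x, ENNReal.ofReal (x^2) ∂μ) ^ (1/2 : ℝ) := by
  have hm : Measurable (fun x : ℝ => (x, (0:ℝ))) := measurable_id.prodMk measurable_const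
  have h1 : (μ.map (fun x : ℝ => (x, (0:ℝ)))).map Prod.fst = μ := by
    rw [Measure.map_map measurable_fst hm]; exact Measure.map_id
  have h2 : (μ.map (fun x : ℝ => (x, (0:ℝ)))).map Prod.snd = Measure.dirac 0 := by
    rw [Measure.map_map measurable_snd hm]
    show μ.map (fun _ => (0:ℝ)) = Measure.dirac 0
    rw [Measure.map_const]
    simp
  have h := W2_le_coupling h1 h2
  rw [cost, lintegral_map measurable_cost_integrand hm] at h
  refine le_trans h (le_of_eq ?_)
  congr 1
  exact lintegral_congr (fun a => by simp)




variable {μ ν ρ : Measure ℝ}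

lemma ofReal_sq_eq_rpow (s t : ℝ) :
    ENNReal.ofReal ((s - t)^2) = (ENNReal.ofReal |s - t|) ^ (2:ℝ) := by
  rw [ENNReal.ofReal_rpow_of_nonneg (abs_nonneg _) (by norm_num), rpow_two_abs]

lemma coupling_isProbability {π : Measure (ℝ × ℝ)} [IsProbabilityMeasure μ]
    (h1 : π.map Prod.fst = μ) : IsProbabilityMeasure π := by
  constructor
  have h : (π.map Prod.fst) univ = π univ := by
    rw [Measure.map_apply measurable_fst MeasurableSet.univ, preimage_univ]
  rw [← h, h1, measure_univ]

lemma map_compProd_left (ν : Measure ℝ) [IsProbabilityMeasure ν] (κ₁ κ₂ : Kernel ℝ ℝ)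
    [IsMarkovKernel κ₁] [IsMarkovKernel κ₂] :
    (ν ⊗ₘ (κ₁ ×ₖ κ₂)).map (fun p : ℝ × ℝ × ℝ => (p.1, p.2.1)) = ν ⊗ₘ κ₁ := by
  have hmeas : Measurable (fun p : ℝ × ℝ × ℝ => (p.1, p.2.1)) :=
    measurable_fst.prodMk (measurable_fst.comp measurable_snd)
  refine Measure.ext (fun s hs => ?_)
  rw [Measure.map_apply hmeas hs, Measure.compProd_apply (hmeas hs), Measure.compProd_apply hs]
  refine lintegral_congr (fun y => ?_)
  rw [Kernel.prod_apply]
  have hset : Prod.mk y ⁻¹' ((fun p : ℝ × ℝ × ℝ => (p.1, p.2.1)) ⁻¹' s)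
      = (Prod.mk y ⁻¹' s) ×ˢ (univ : Set ℝ) := by
    ext q
    simp [Set.mem_prod]
  rw [hset, Measure.prod_prod, measure_univ, mul_one]

lemma map_compProd_right (ν : Measure ℝ) [IsProbabilityMeasure ν] (κ₁ κ₂ : Kernel ℝ ℝ)
    [IsMarkovKernel κ₁] [IsMarkovKernel κ₂] :
    (ν ⊗ₘ (κ₁ ×ₖ κ₂)).map (fun p : ℝ × ℝ × ℝ => (p.1, p.2.2)) = ν ⊗ₘ κ₂ := by
  have hmeas : Measurable (fun p : ℝ × ℝ × ℝ => (p.1, p.2.2)) :=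
    measurable_fst.prodMk (measurable_snd.comp measurable_snd)
  refine Measure.ext (fun s hs => ?_)
  rw [Measure.map_apply hmeas hs, Measure.compProd_apply (hmeas hs), Measure.compProd_apply hs]
  refine lintegral_congr (fun y => ?_)
  rw [Kernel.prod_apply]
  have hset : Prod.mk y ⁻¹' ((fun p : ℝ × ℝ × ℝ => (p.1, p.2.2)) ⁻¹' s)
      = (univ : Set ℝ) ×ˢ (Prod.mk y ⁻¹' s) := by
    ext q
    simp [Set.mem_prod]
  rw [hset, Measure.prod_prod, measure_univ, one_mul]

lemma W2_le_cost_sum [IsProbabilityMeasure μ] [IsProbabilityMeasure ν] [IsProbabilityMeasure ρ]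
    {π₁ π₂ : Measure (ℝ × ℝ)} (h1f : π₁.map Prod.fst = μ) (h1s : π₁.map Prod.snd = ν)
    (h2f : π₂.map Prod.fst = ν) (h2s : π₂.map Prod.snd = ρ) :
    W2 μ ρ ≤ (cost π₁) ^ (1/2:ℝ) + (cost π₂) ^ (1/2:ℝ) := by
  haveI hπ₁ : IsProbabilityMeasure π₁ := coupling_isProbability h1f
  haveI hπ₂ : IsProbabilityMeasure π₂ := coupling_isProbability h2f
  set σ : Measure (ℝ × ℝ) := π₁.map Prod.swap with hσ
  haveI hσprob : IsProbabilityMeasure σ := Measure.isProbabilityMeasure_map measurable_swap.aemeasurable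
  have hσfst : σ.fst = ν := by
    show σ.map Prod.fst = ν
    rw [hσ, Measure.map_map measurable_fst measurable_swap]
    exact h1s
  set κ₁ := σ.condKernel with hκ₁
  set κ₂ := π₂.condKernel with hκ₂
  set m : Measure (ℝ × ℝ × ℝ) := ν ⊗ₘ (κ₁ ×ₖ κ₂) with hm
  have hL : m.map (fun p : ℝ × ℝ × ℝ => (p.1, p.2.1)) = σ := by
    rw [hm, map_compProd_left]
    have h := σ.disintegrate σ.condKernel
    rwa [hσfst] at h
  have hR : m.map (fun p : ℝ × ℝ × ℝ => (p.1, p.2.2)) = π₂ := by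
    rw [hm, map_compProd_right]
    have h := π₂.disintegrate π₂.condKernel
    rwa [show π₂.fst = ν from h2f] at h
  have hxz : Measurable (fun p : ℝ × ℝ × ℝ => (p.2.1, p.2.2)) :=
    (measurable_fst.comp measurable_snd).prodMk (measurable_snd.comp measurable_snd)
  have hyx : Measurable (fun p : ℝ × ℝ × ℝ => (p.1, p.2.1)) :=
    measurable_fst.prodMk (measurable_fst.comp measurable_snd)
  have hyz : Measurable (fun p : ℝ × ℝ × ℝ => (p.1, p.2.2)) :=
    measurable_fst.prodMk (measurable_snd.comp measurable_snd)
  set m13 := m.map (fun p : ℝ × ℝ × ℝ => (p.2.1, p.2.2)) with hm13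
  have h13f : m13.map Prod.fst = μ := by
    rw [hm13, Measure.map_map measurable_fst hxz]
    rw [show (Prod.fst ∘ fun p : ℝ × ℝ × ℝ => (p.2.1, p.2.2))
        = (Prod.snd ∘ fun p : ℝ × ℝ × ℝ => (p.1, p.2.1)) from rfl]
    rw [← Measure.map_map measurable_snd hyx, hL, hσ,
      Measure.map_map measurable_snd measurable_swap]
    exact h1f
  have h13s : m13.map Prod.snd = ρ := by
    rw [hm13, Measure.map_map measurable_snd hxz]
    rw [show (Prod.snd ∘ fun p : ℝ × ℝ × ℝ => (p.2.1, p.2.2))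
        = (Prod.snd ∘ fun p : ℝ × ℝ × ℝ => (p.1, p.2.2)) from rfl]
    rw [← Measure.map_map measurable_snd hyz, hR]
    exact h2s
  have hW := W2_le_coupling h13f h13s
  have hmswap : m.map (fun p : ℝ × ℝ × ℝ => (p.2.1, p.1)) = π₁ := by
    rw [show (fun p : ℝ × ℝ × ℝ => (p.2.1, p.1))
        = (Prod.swap ∘ fun p : ℝ × ℝ × ℝ => (p.1, p.2.1)) from rfl]
    rw [← Measure.map_map measurable_swap hyx, hL, hσ,
      Measure.map_map measurable_swap measurable_swap]
    rw [show (Prod.swap ∘ Prod.swap : ℝ × ℝ → ℝ × ℝ) = id from rfl, Measure.map_id]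
  set F : ℝ × ℝ × ℝ → ℝ≥0∞ := fun p => ENNReal.ofReal |p.2.1 - p.1| with hF
  set G : ℝ × ℝ × ℝ → ℝ≥0∞ := fun p => ENNReal.ofReal |p.1 - p.2.2| with hG
  have hFm : AEMeasurable F m :=
    (((measurable_fst.comp measurable_snd).sub measurable_fst).abs.ennreal_ofReal).aemeasurable
  have hGm : AEMeasurable G m :=
    ((measurable_fst.sub (measurable_snd.comp measurable_snd)).abs.ennreal_ofReal).aemeasurable
  have hFint : ∫⁻ p, F p ^ (2:ℝ) ∂m = cost π₁ := by
    rw [← hmswap, cost, lintegral_map measurable_cost_integrand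
      (show Measurable (fun p : ℝ × ℝ × ℝ => (p.2.1, p.1)) from
        (measurable_fst.comp measurable_snd).prodMk measurable_fst)]
    exact lintegral_congr (fun p => by rw [hF, ofReal_sq_eq_rpow])
  have hGint : ∫⁻ p, G p ^ (2:ℝ) ∂m = cost π₂ := by
    rw [← hR, cost, lintegral_map measurable_cost_integrand hyz]
    exact lintegral_congr (fun p => by rw [hG, ofReal_sq_eq_rpow])
  have hcost13 : cost m13 = ∫⁻ p, ENNReal.ofReal ((p.2.1 - p.2.2)^2) ∂m := by
    rw [hm13, cost, lintegral_map measurable_cost_integrand hxz]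
  calc W2 μ ρ ≤ (cost m13) ^ (1/2:ℝ) := hW
    _ = (∫⁻ p, ENNReal.ofReal ((p.2.1 - p.2.2)^2) ∂m) ^ (1/2:ℝ) := by rw [hcost13]
    _ ≤ (∫⁻ p, ((F + G) p) ^ (2:ℝ) ∂m) ^ (1/2:ℝ) := by
        apply ENNReal.rpow_le_rpow _ (by norm_num)
        refine lintegral_mono (fun p => ?_)
        rw [ofReal_sq_eq_rpow]
        apply ENNReal.rpow_le_rpow _ (by norm_num)
        have : (F + G) p = ENNReal.ofReal (|p.2.1 - p.1| + |p.1 - p.2.2|) := by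
          simp only [Pi.add_apply, hF, hG]
          rw [ENNReal.ofReal_add (abs_nonneg _) (abs_nonneg _)]
        rw [this]
        exact ENNReal.ofReal_le_ofReal (abs_sub_le _ _ _)
    _ ≤ (∫⁻ p, F p ^ (2:ℝ) ∂m) ^ (1/(2:ℝ)) + (∫⁻ p, G p ^ (2:ℝ) ∂m) ^ (1/(2:ℝ)) :=
        ENNReal.lintegral_Lp_add_le hFm hGm (by norm_num)
    _ = (cost π₁) ^ (1/2:ℝ) + (cost π₂) ^ (1/2:ℝ) := by rw [hFint, hGint]

lemma W2_triangle [IsProbabilityMeasure μ] [IsProbabilityMeasure ν] [IsProbabilityMeasure ρ] :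
    W2 μ ρ ≤ W2 μ ν + W2 ν ρ := by
  rcases eq_or_ne (W2 μ ν) ⊤ with h | h1
  · rw [h, top_add]; exact le_top
  rcases eq_or_ne (W2 ν ρ) ⊤ with h | h2
  · rw [h, add_top]; exact le_top
  refine ENNReal.le_of_forall_pos_le_add (fun ε hε _ => ?_)
  have hε2 : ((ε : ℝ≥0∞) / 2) ≠ 0 :=
    (ENNReal.half_pos (by exact_mod_cast hε.ne')).ne' 
  obtain ⟨π₁, h1f, h1s, hc1⟩ := exists_coupling_of_W2_lt (ENNReal.lt_add_right h1 hε2)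
  obtain ⟨π₂, h2f, h2s, hc2⟩ := exists_coupling_of_W2_lt (ENNReal.lt_add_right h2 hε2)
  calc W2 μ ρ ≤ (cost π₁) ^ (1/2:ℝ) + (cost π₂) ^ (1/2:ℝ) := W2_le_cost_sum h1f h1s h2f h2s
    _ ≤ (W2 μ ν + (ε : ℝ≥0∞)/2) + (W2 ν ρ + (ε : ℝ≥0∞)/2) := add_le_add hc1.le hc2.le
    _ = W2 μ ν + W2 ν ρ + (ε : ℝ≥0∞) := by
        rw [add_add_add_comm, ENNReal.add_halves]




variable {μ ν ρ : Measure ℝ}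

/-- Lipschitz test-function transfer bound. -/
lemma ofReal_abs_integral_sub_le [IsProbabilityMeasure μ] [IsProbabilityMeasure ν]
    {g : ℝ → ℝ} {L C : ℝ} (hL0 : 0 < L) (hg : Measurable g)
    (hLip : ∀ x y, |g x - g y| ≤ L * |x - y|) (hC : ∀ x, |g x| ≤ C) :
    ENNReal.ofReal |∫ x, g x ∂μ - ∫ x, g x ∂ν| ≤ ENNReal.ofReal L * W2 μ ν := by
  -- core bound per coupling
  have core : ∀ π : Measure (ℝ × ℝ), π.map Prod.fst = μ → π.map Prod.snd = ν →
      ENNReal.ofReal |∫ x, g x ∂μ - ∫ x, g x ∂ν| ≤ ENNReal.ofReal L * (cost π) ^ (1/2:ℝ) := by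
    intro π h1 h2
    haveI : IsProbabilityMeasure π := coupling_isProbability h1
    have hint1 : Integrable (fun q : ℝ × ℝ => g q.1) π := by
      refine ⟨(hg.comp measurable_fst).aestronglyMeasurable, ?_⟩
      exact HasFiniteIntegral.of_bounded (C := C)
        (Filter.Eventually.of_forall (fun q => by rw [Real.norm_eq_abs]; exact hC _))
    have hint2 : Integrable (fun q : ℝ × ℝ => g q.2) π := by
      refine ⟨(hg.comp measurable_snd).aestronglyMeasurable, ?_⟩
      exact HasFiniteIntegral.of_bounded (C := C)
        (Filter.Eventually.of_forall (fun q => by rw [Real.norm_eq_abs]; exact hC _))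
    have hμ : ∫ x, g x ∂μ = ∫ q : ℝ × ℝ, g q.1 ∂π := by
      rw [← h1, integral_map measurable_fst.aemeasurable hg.aestronglyMeasurable]
    have hν : ∫ x, g x ∂ν = ∫ q : ℝ × ℝ, g q.2 ∂π := by
      rw [← h2, integral_map measurable_snd.aemeasurable hg.aestronglyMeasurable]
    have hsub : ∫ x, g x ∂μ - ∫ x, g x ∂ν = ∫ q : ℝ × ℝ, (g q.1 - g q.2) ∂π := by
      rw [hμ, hν, integral_sub hint1 hint2]
    rw [hsub]
    calc ENNReal.ofReal |∫ q : ℝ × ℝ, (g q.1 - g q.2) ∂π|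
        = ↑‖∫ q : ℝ × ℝ, (g q.1 - g q.2) ∂π‖₊ := by
          rw [← enorm_eq_nnnorm, ← ofReal_norm_eq_enorm, Real.norm_eq_abs]
      _ ≤ ∫⁻ q : ℝ × ℝ, ↑‖g q.1 - g q.2‖₊ ∂π := enorm_integral_le_lintegral_enorm _
      _ ≤ ∫⁻ q : ℝ × ℝ, ENNReal.ofReal L * ENNReal.ofReal |q.1 - q.2| ∂π := by
          refine lintegral_mono (fun q => ?_)
          rw [← enorm_eq_nnnorm, ← ofReal_norm_eq_enorm, Real.norm_eq_abs,
            ← ENNReal.ofReal_mul hL0.le]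
          exact ENNReal.ofReal_le_ofReal (hLip _ _)
      _ = ENNReal.ofReal L * ∫⁻ q : ℝ × ℝ, ENNReal.ofReal |q.1 - q.2| ∂π := by
          rw [lintegral_const_mul _ (show Measurable (fun q : ℝ × ℝ => ENNReal.ofReal |q.1 - q.2|) from
            (measurable_fst.sub measurable_snd).abs.ennreal_ofReal)]
      _ ≤ ENNReal.ofReal L * (cost π) ^ (1/2:ℝ) := by
          refine _root_.mul_le_mul_right ?_ _
          have hcs := ENNReal.lintegral_mul_le_Lp_mul_Lq π
            Real.HolderConjugate.two_two
            (((measurable_fst.sub measurable_snd).abs.ennreal_ofReal).aemeasurable)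
            (aemeasurable_const (b := (1:ℝ≥0∞)))
          simp only [mul_one, one_rpow, lintegral_const, measure_univ] at hcs
          calc ∫⁻ q : ℝ × ℝ, ENNReal.ofReal |q.1 - q.2| ∂π
              ≤ (∫⁻ q : ℝ × ℝ, (ENNReal.ofReal |q.1 - q.2|) ^ (2:ℝ) ∂π) ^ (1/(2:ℝ)) := by
                simpa using hcs
            _ = (cost π) ^ (1/2:ℝ) := by
                congr 1
                exact (lintegral_congr (fun q : ℝ × ℝ => ofReal_sq_eq_rpow q.1 q.2)).symm
  -- now pass to the infimum
  rcases eq_or_ne (W2 μ ν) ⊤ with htop | hfin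
  · rw [htop, ENNReal.mul_top (by simpa using hL0)]
    exact le_top
  refine ENNReal.le_of_forall_pos_le_add (fun ε hε _ => ?_)
  have hLne : ENNReal.ofReal L ≠ 0 := by simpa using hL0
  have hLnetop : ENNReal.ofReal L ≠ ⊤ := ENNReal.ofReal_ne_top
  have hδ : ((ε : ℝ≥0∞) / ENNReal.ofReal L) ≠ 0 := by
    simp only [ne_eq, ENNReal.div_eq_zero_iff, hLnetop, or_false]
    exact_mod_cast hε.ne'
  obtain ⟨π, h1, h2, hc⟩ := exists_coupling_of_W2_lt
    (ENNReal.lt_add_right hfin hδ)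
  calc ENNReal.ofReal |∫ x, g x ∂μ - ∫ x, g x ∂ν|
      ≤ ENNReal.ofReal L * (cost π) ^ (1/2:ℝ) := core π h1 h2
    _ ≤ ENNReal.ofReal L * (W2 μ ν + (ε : ℝ≥0∞) / ENNReal.ofReal L) :=
        _root_.mul_le_mul_right hc.le _
    _ = ENNReal.ofReal L * W2 μ ν + (ε : ℝ≥0∞) := by
        rw [mul_add, ENNReal.mul_div_cancel hLne hLnetop]

/-- Convergence of integrals of Lipschitz bounded functions along W2-convergence. -/
lemma integral_tendsto_of_W2 {μs : ℕ → Measure ℝ} (hμs : ∀ n, IsProbabilityMeasure (μs n))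
    [IsProbabilityMeasure ν] (hconv : Tendsto (fun n => W2 (μs n) ν) atTop (nhds 0))
    {g : ℝ → ℝ} {L C : ℝ} (hL0 : 0 < L) (hg : Measurable g)
    (hLip : ∀ x y, |g x - g y| ≤ L * |x - y|) (hC : ∀ x, |g x| ≤ C) :
    Tendsto (fun n => ∫ x, g x ∂(μs n)) atTop (nhds (∫ x, g x ∂ν)) := by
  have hbd : ∀ n, ENNReal.ofReal |∫ x, g x ∂(μs n) - ∫ x, g x ∂ν|
      ≤ ENNReal.ofReal L * W2 (μs n) ν := by
    intro n
    haveI := hμs n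
    exact ofReal_abs_integral_sub_le hL0 hg hLip hC
  have hR : Tendsto (fun n => ENNReal.ofReal L * W2 (μs n) ν) atTop (nhds 0) := by
    have := ENNReal.Tendsto.const_mul (a := ENNReal.ofReal L) hconv
      (Or.inr ENNReal.ofReal_ne_top)
    simpa using this
  have h0 : Tendsto (fun n => ENNReal.ofReal |∫ x, g x ∂(μs n) - ∫ x, g x ∂ν|) atTop (nhds 0) :=
    tendsto_of_tendsto_of_tendsto_of_le_of_le tendsto_const_nhds hR
      (fun n => zero_le) hbd
  have h1 : Tendsto (fun n => |∫ x, g x ∂(μs n) - ∫ x, g x ∂ν|) atTop (nhds 0) := by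
    have := (ENNReal.tendsto_toReal (a := 0) (by norm_num)).comp h0
    simp only [Function.comp_def, ENNReal.toReal_ofReal (abs_nonneg _)] at this
    simpa using this
  have h2 : Tendsto (fun n => ∫ x, g x ∂(μs n) - ∫ x, g x ∂ν) atTop (nhds 0) :=
    (tendsto_zero_iff_abs_tendsto_zero _).mpr h1
  have := h2.add_const (∫ x, g x ∂ν)
  simpa using this

/-- The step approximator: `0` below `c`, `1` above `c + δ`. -/
def stairG (c δ : ℝ) : ℝ → ℝ := fun x => max 0 (min 1 ((x - c)/δ))

lemma stairG_monotone {c δ : ℝ} (hδ : 0 < δ) : Monotone (stairG c δ) := by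
  intro x y hxy
  unfold stairG
  have h : (x - c)/δ ≤ (y - c)/δ := by gcongr
  exact max_le_max le_rfl (min_le_min le_rfl h)

lemma stairG_bounds {c δ : ℝ} (hδ : 0 < δ) (x : ℝ) :
    0 ≤ stairG c δ x ∧ stairG c δ x ≤ 1 := by
  constructor
  · exact le_max_left _ _
  · unfold stairG
    apply max_le (by norm_num)
    exact min_le_left _ _

lemma stairG_abs_le {c δ : ℝ} (hδ : 0 < δ) (x : ℝ) : |stairG c δ x| ≤ 1 := by
  rcases stairG_bounds hδ x with ⟨h0, h1⟩
  rw [abs_le]; constructor <;> linarith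

lemma abs_min_const_sub (c a b : ℝ) : |min c a - min c b| ≤ |a - b| := by
  rw [abs_sub_le_iff]
  constructor
  · have h1 : min c a ≤ min c (b + |a - b|) :=
      min_le_min le_rfl (by linarith [le_abs_self (a - b)])
    have h2 : min c (b + |a - b|) ≤ min (c + |a - b|) (b + |a - b|) :=
      min_le_min (le_add_of_nonneg_right (abs_nonneg _)) le_rfl
    have h3 : min (c + |a - b|) (b + |a - b|) = min c b + |a - b| :=
      min_add_add_right c b _
    linarith
  · have h1 : min c b ≤ min c (a + |a - b|) :=
      min_le_min le_rfl (by
        have := neg_abs_le (a - b)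
        linarith)
    have h2 : min c (a + |a - b|) ≤ min (c + |a - b|) (a + |a - b|) :=
      min_le_min (le_add_of_nonneg_right (abs_nonneg _)) le_rfl
    have h3 : min (c + |a - b|) (a + |a - b|) = min c a + |a - b| :=
      min_add_add_right c a _
    linarith

lemma stairG_lipschitz {c δ : ℝ} (hδ : 0 < δ) (x y : ℝ) :
    |stairG c δ x - stairG c δ y| ≤ (1/δ) * |x - y| := by
  unfold stairG
  have h1 : |max 0 (min 1 ((x - c)/δ)) - max 0 (min 1 ((y - c)/δ))|
      ≤ |min 1 ((x - c)/δ) - min 1 ((y - c)/δ)| := by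
    rw [max_comm 0 _, max_comm 0 _]
    exact abs_max_sub_max_le_abs _ _ _
  have h2 : |min 1 ((x - c)/δ) - min 1 ((y - c)/δ)| ≤ |(x - c)/δ - (y - c)/δ| :=
    abs_min_const_sub 1 _ _
  have h3 : |(x - c)/δ - (y - c)/δ| = (1/δ) * |x - y| := by
    rw [div_sub_div_same, show x - c - (y - c) = x - y by ring, abs_div,
      abs_of_pos hδ]
    ring
  calc |max 0 (min 1 ((x - c)/δ)) - max 0 (min 1 ((y - c)/δ))|
      ≤ |min 1 ((x - c)/δ) - min 1 ((y - c)/δ)| := h1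
    _ ≤ |(x - c)/δ - (y - c)/δ| := h2
    _ = (1/δ) * |x - y| := h3

lemma stairG_measurable {c δ : ℝ} : Measurable (stairG c δ) := by
  unfold stairG
  exact measurable_const.max (measurable_const.min ((measurable_id.sub_const c).div_const δ))

lemma stairG_eq_one {c δ : ℝ} (hδ : 0 < δ) {x : ℝ} (hx : c + δ ≤ x) : stairG c δ x = 1 := by
  unfold stairG
  have : (1:ℝ) ≤ (x - c)/δ := by
    rw [le_div_iff₀ hδ]; linarith
  rw [min_eq_left this]
  exact max_eq_right (by norm_num)

lemma stairG_eq_zero {c δ : ℝ} (hδ : 0 < δ) {x : ℝ} (hx : x ≤ c) : stairG c δ x = 0 := by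
  unfold stairG
  have : (x - c)/δ ≤ 0 := div_nonpos_iff.mpr (Or.inr ⟨by linarith, hδ.le⟩)
  rw [max_eq_left]
  exact le_trans (min_le_right _ _) this




variable {μ ν ρ α β : Measure ℝ}

lemma integrable_bdd [IsFiniteMeasure μ] {g : ℝ → ℝ} {C : ℝ} (hg : Measurable g)
    (hC : ∀ x, |g x| ≤ C) : Integrable g μ :=
  ⟨hg.aestronglyMeasurable, HasFiniteIntegral.of_bounded (C := C)
    (Filter.Eventually.of_forall (fun x => by rw [Real.norm_eq_abs]; exact hC x))⟩

lemma cdfLE_iff_Ioi [IsProbabilityMeasure μ] [IsProbabilityMeasure ν] :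
    CdfLE μ ν ↔ ∀ x, μ (Ioi x) ≤ ν (Ioi x) := by
  constructor
  · intro h x
    have h1 : ν (Iic x) ≤ μ (Iic x) := by
      have := h x
      rw [cdf_eq_real, cdf_eq_real, measureReal_def, measureReal_def] at this
      exact (ENNReal.toReal_le_toReal (measure_ne_top _ _) (measure_ne_top _ _)).mp this
    have e1 : μ (Ioi x) = 1 - μ (Iic x) := by
      rw [← Set.compl_Iic, prob_compl_eq_one_sub measurableSet_Iic]
    have e2 : ν (Ioi x) = 1 - ν (Iic x) := by
      rw [← Set.compl_Iic, prob_compl_eq_one_sub measurableSet_Iic]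
    rw [e1, e2]
    exact tsub_le_tsub_left h1 1
  · intro h x
    have h1 : μ (Ioi x) ≤ ν (Ioi x) := h x
    have e1 : μ (Iic x) = 1 - μ (Ioi x) := by
      rw [← Set.compl_Ioi, prob_compl_eq_one_sub measurableSet_Ioi]
    have e2 : ν (Iic x) = 1 - ν (Ioi x) := by
      rw [← Set.compl_Ioi, prob_compl_eq_one_sub measurableSet_Ioi]
    rw [cdf_eq_real, cdf_eq_real, measureReal_def, measureReal_def]
    refine (ENNReal.toReal_le_toReal (measure_ne_top _ _) (measure_ne_top _ _)).mpr ?_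
    rw [e1, e2]
    exact tsub_le_tsub_left h1 1

lemma integral_stairG_ge [IsProbabilityMeasure μ] {c δ : ℝ} (hδ : 0 < δ) :
    (μ (Ioi (c + δ))).toReal ≤ ∫ x, stairG c δ x ∂μ := by
  have hpt : (Ioi (c + δ)).indicator (fun _ => (1:ℝ)) ≤ stairG c δ := by
    intro x
    by_cases hx : x ∈ Ioi (c + δ)
    · rw [indicator_of_mem hx, stairG_eq_one hδ (le_of_lt hx)]
    · rw [indicator_of_notMem hx]
      exact (stairG_bounds hδ x).1
  have h := integral_mono (μ := μ)
    ((integrable_const (1:ℝ)).indicator measurableSet_Ioi)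
    (integrable_bdd stairG_measurable (stairG_abs_le hδ)) hpt
  rw [integral_indicator_const (1:ℝ) measurableSet_Ioi] at h
  simpa [measureReal_def] using h

lemma integral_stairG_le [IsProbabilityMeasure μ] {c δ : ℝ} (hδ : 0 < δ) :
    ∫ x, stairG c δ x ∂μ ≤ (μ (Ioi c)).toReal := by
  have hpt : stairG c δ ≤ (Ioi c).indicator (fun _ => (1:ℝ)) := by
    intro x
    by_cases hx : x ∈ Ioi c
    · rw [indicator_of_mem hx]
      exact (stairG_bounds hδ x).2
    · rw [indicator_of_notMem hx, stairG_eq_zero hδ (by simpa using hx)]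
  have h := integral_mono (μ := μ)
    (integrable_bdd stairG_measurable (stairG_abs_le hδ))
    ((integrable_const (1:ℝ)).indicator measurableSet_Ioi) hpt
  rw [integral_indicator_const (1:ℝ) measurableSet_Ioi] at h
  simpa [measureReal_def] using h

lemma measure_Ioi_le_of_shifted {x : ℝ} (h : ∀ δ : ℝ, 0 < δ → α (Ioi (x + δ)) ≤ β (Ioi x)) :
    α (Ioi x) ≤ β (Ioi x) := by
  have hmono : Monotone (fun n : ℕ => Ioi (x + 1/((n:ℝ)+1))) := by
    intro n m hnm
    apply Ioi_subset_Ioi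
    have h1 : ((n:ℝ)+1) ≤ (m:ℝ)+1 := by
      have : (n:ℝ) ≤ (m:ℝ) := by exact_mod_cast hnm
      linarith
    have h2 : (1:ℝ)/((m:ℝ)+1) ≤ 1/((n:ℝ)+1) := one_div_le_one_div_of_le (by positivity) h1
    linarith
  have hunion : ⋃ n : ℕ, Ioi (x + 1/((n:ℝ)+1)) = Ioi x := by
    ext y
    simp only [mem_iUnion, mem_Ioi]
    constructor
    · rintro ⟨n, hn⟩
      have : (0:ℝ) < 1/((n:ℝ)+1) := by positivity
      linarith
    · intro hy
      obtain ⟨n, hn⟩ := exists_nat_one_div_lt (show (0:ℝ) < y - x by linarith)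
      exact ⟨n, by push_cast at hn ⊢; linarith⟩
  have ht := tendsto_measure_iUnion_atTop (μ := α) hmono
  rw [hunion] at ht
  refine le_of_tendsto ht (Filter.Eventually.of_forall (fun n => ?_))
  exact h _ (by positivity)

/-- Closure of the cdf-order under W2 limits (lower bound version): if `ρ ≤st μs n`
for all `n` and `μs n → ν`, then `ρ ≤st ν`. -/
lemma cdfLE_of_tendsto {μs : ℕ → Measure ℝ} (hμs : ∀ n, IsProbabilityMeasure (μs n))
    [IsProbabilityMeasure ν] [IsProbabilityMeasure ρ]
    (hconv : Tendsto (fun n => W2 (μs n) ν) atTop (nhds 0))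
    (hord : ∀ n, CdfLE ρ (μs n)) : CdfLE ρ ν := by
  rw [cdfLE_iff_Ioi]
  intro x
  refine measure_Ioi_le_of_shifted (fun δ hδ => ?_)
  have key : (ρ (Ioi (x + δ))).toReal ≤ (ν (Ioi x)).toReal := by
    have s1 : (ρ (Ioi (x + δ))).toReal ≤ ∫ y, stairG x δ y ∂ρ := integral_stairG_ge hδ
    have s3 : Tendsto (fun n => ∫ y, stairG x δ y ∂(μs n)) atTop (nhds (∫ y, stairG x δ y ∂ν)) :=
      integral_tendsto_of_W2 hμs hconv (by positivity) stairG_measurable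
        (stairG_lipschitz hδ) (stairG_abs_le hδ)
    have s2 : ∫ y, stairG x δ y ∂ρ ≤ ∫ y, stairG x δ y ∂ν := by
      refine ge_of_tendsto s3 (Filter.Eventually.of_forall (fun n => ?_))
      haveI := hμs n
      exact stOrder_of_cdfLE (hord n) (stairG x δ) (stairG_monotone hδ) ⟨1, stairG_abs_le hδ⟩
    have s4 : ∫ y, stairG x δ y ∂ν ≤ (ν (Ioi x)).toReal := integral_stairG_le hδ
    linarith
  exact (ENNReal.toReal_le_toReal (measure_ne_top _ _) (measure_ne_top _ _)).mp key

/-- Closure of the cdf-order under W2 limits (upper bound version). -/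
lemma cdfLE_of_tendsto' {μs : ℕ → Measure ℝ} (hμs : ∀ n, IsProbabilityMeasure (μs n))
    [IsProbabilityMeasure ν] [IsProbabilityMeasure ρ]
    (hconv : Tendsto (fun n => W2 (μs n) ν) atTop (nhds 0))
    (hord : ∀ n, CdfLE (μs n) ρ) : CdfLE ν ρ := by
  rw [cdfLE_iff_Ioi]
  intro x
  refine measure_Ioi_le_of_shifted (fun δ hδ => ?_)
  have key : (ν (Ioi (x + δ))).toReal ≤ (ρ (Ioi x)).toReal := by
    have s1 : (ν (Ioi (x + δ))).toReal ≤ ∫ y, stairG x δ y ∂ν := integral_stairG_ge hδ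
    have s3 : Tendsto (fun n => ∫ y, stairG x δ y ∂(μs n)) atTop (nhds (∫ y, stairG x δ y ∂ν)) :=
      integral_tendsto_of_W2 hμs hconv (by positivity) stairG_measurable
        (stairG_lipschitz hδ) (stairG_abs_le hδ)
    have s2 : ∫ y, stairG x δ y ∂ν ≤ ∫ y, stairG x δ y ∂ρ := by
      refine le_of_tendsto s3 (Filter.Eventually.of_forall (fun n => ?_))
      haveI := hμs n
      exact stOrder_of_cdfLE (hord n) (stairG x δ) (stairG_monotone hδ) ⟨1, stairG_abs_le hδ⟩
    have s4 : ∫ y, stairG x δ y ∂ρ ≤ (ρ (Ioi x)).toReal := integral_stairG_le hδ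
    linarith
  exact (ENNReal.toReal_le_toReal (measure_ne_top _ _) (measure_ne_top _ _)).mp key

lemma eq_of_cdfLE_antisymm [IsProbabilityMeasure μ] [IsProbabilityMeasure ν]
    (h1 : CdfLE μ ν) (h2 : CdfLE ν μ) : μ = ν := by
  refine Measure.ext_of_Iic μ ν (fun x => ?_)
  rw [← ofReal_cdf μ x, ← ofReal_cdf ν x]
  exact congrArg _ (le_antisymm (h2 x) (h1 x))

lemma eq_of_W2_eq_zero [IsProbabilityMeasure μ] [IsProbabilityMeasure ν]
    (h : W2 μ ν = 0) : μ = ν := by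
  have h1 : CdfLE μ ν := by
    refine cdfLE_of_tendsto (μs := fun _ => μ) (fun _ => by infer_instance) ?_ (fun n x => le_rfl)
    simpa [h] using (tendsto_const_nhds : Tendsto (fun _ : ℕ => (0:ℝ≥0∞)) atTop (nhds 0))
  have h2 : CdfLE ν μ := by
    refine cdfLE_of_tendsto (μs := fun _ => ν) (fun _ => by infer_instance) ?_ (fun n x => le_rfl)
    have h' : W2 ν μ = 0 := by rw [← W2_symm, h]
    simpa [h'] using (tendsto_const_nhds : Tendsto (fun _ : ℕ => (0:ℝ≥0∞)) atTop (nhds 0))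
  exact eq_of_cdfLE_antisymm h1 h2

/-- Uniqueness of W2 limits. -/
lemma W2_limit_unique {xs : ℕ → Measure ℝ} (hxs : ∀ n, IsProbabilityMeasure (xs n))
    [IsProbabilityMeasure ν] [IsProbabilityMeasure ρ]
    (h1 : Tendsto (fun n => W2 (xs n) ν) atTop (nhds 0))
    (h2 : Tendsto (fun n => W2 (xs n) ρ) atTop (nhds 0)) : ν = ρ := by
  have hsum : Tendsto (fun n => W2 (xs n) ν + W2 (xs n) ρ) atTop (nhds 0) := by
    have := Tendsto.add h1 h2
    simpa using this
  have hle : W2 ν ρ ≤ 0 := by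
    refine ge_of_tendsto hsum (Filter.Eventually.of_forall (fun n => ?_))
    haveI := hxs n
    calc W2 ν ρ ≤ W2 ν (xs n) + W2 (xs n) ρ := W2_triangle
      _ = W2 (xs n) ν + W2 (xs n) ρ := by rw [W2_symm]
  exact eq_of_W2_eq_zero (le_antisymm hle (zero_le))




/-- Helly-type sequential compactness for stochastically sandwiched probability measures,
with convergence in W2. -/
lemma helly_selection {ρs : ℕ → Measure ℝ} (hρs : ∀ n, IsProbabilityMeasure (ρs n))
    {a b : Measure ℝ} [IsProbabilityMeasure a] [IsProbabilityMeasure b]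
    (h2a : ∫⁻ x, ENNReal.ofReal (x^2) ∂a ≠ ⊤) (h2b : ∫⁻ x, ENNReal.ofReal (x^2) ∂b ≠ ⊤)
    (ha : ∀ n, CdfLE a (ρs n)) (hb : ∀ n, CdfLE (ρs n) b) :
    ∃ (φ : ℕ → ℕ) (ν : Measure ℝ), StrictMono φ ∧ IsProbabilityMeasure ν ∧
      CdfLE a ν ∧ CdfLE ν b ∧ (∫⁻ x, ENNReal.ofReal (x^2) ∂ν ≠ ⊤) ∧
      Tendsto (fun n => W2 (ρs (φ n)) ν) atTop (nhds 0) := by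
  classical
  -- Stage 1: diagonal selection via compactness of the product space
  have hsc : IsSeqCompact (univ : Set (ℚ → Icc (0:ℝ) 1)) :=
    IsCompact.isSeqCompact isCompact_univ
  set Gn : ℕ → ℚ → Icc (0:ℝ) 1 :=
    fun n q => ⟨cdf (ρs n) q, ⟨cdf_nonneg _ _, cdf_le_one _ _⟩⟩ with hGn
  obtain ⟨H, -, φ, hφ, hHconv⟩ := hsc (x := Gn) (fun n => mem_univ _)
  have hq : ∀ q : ℚ, Tendsto (fun n => cdf (ρs (φ n)) q) atTop (nhds (H q).1) := by
    intro q
    have h1 : Tendsto (fun n => (Gn ∘ φ) n q) atTop (nhds (H q)) := tendsto_pi_nhds.mp hHconv q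
    exact ((continuous_subtype_val.tendsto (H q)).comp h1)
  set Hr : ℚ → ℝ := fun q => (H q).1 with hHr
  have hH0 : ∀ q, 0 ≤ Hr q := fun q => (H q).2.1
  have hH1 : ∀ q, Hr q ≤ 1 := fun q => (H q).2.2
  have hHb : ∀ q : ℚ, cdf b q ≤ Hr q := fun q =>
    ge_of_tendsto (hq q) (Eventually.of_forall (fun n => hb (φ n) q))
  have hHa : ∀ q : ℚ, Hr q ≤ cdf a q := fun q =>
    le_of_tendsto (hq q) (Eventually.of_forall (fun n => ha (φ n) q))
  -- Stage 2: the limit Stieltjes function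
  set S : ℝ → Set ℝ := fun x => Hr '' {q : ℚ | x < (q:ℝ)} with hS
  have hSne : ∀ x, (S x).Nonempty := by
    intro x
    obtain ⟨q, hq1, _⟩ := exists_rat_btwn (lt_add_one x)
    exact ⟨Hr q, ⟨q, hq1, rfl⟩⟩
  have hSbdd : ∀ x, BddBelow (S x) := by
    intro x
    refine ⟨0, ?_⟩
    rintro v ⟨q, -, rfl⟩
    exact hH0 q
  set G : ℝ → ℝ := fun x => sInf (S x) with hG
  have hGmono : Monotone G := by
    intro x y hxy
    refine csInf_le_csInf (hSbdd x) (hSne y) ?_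
    exact image_mono (fun q hq => lt_of_le_of_lt hxy hq)
  have hGle : ∀ (x : ℝ) (q : ℚ), x < (q:ℝ) → G x ≤ Hr q :=
    fun x q h => csInf_le (hSbdd x) ⟨q, h, rfl⟩
  have hGlb : ∀ x, cdf b x ≤ G x := by
    intro x
    refine le_csInf (hSne x) ?_
    rintro v ⟨q, hq, rfl⟩
    exact le_trans ((cdf b).mono (le_of_lt hq)) (hHb q)
  have hG0 : ∀ x, 0 ≤ G x := by
    intro x
    refine le_csInf (hSne x) ?_
    rintro v ⟨q, -, rfl⟩
    exact hH0 q
  have hG1 : ∀ x, G x ≤ 1 := by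
    intro x
    obtain ⟨q, hq1, -⟩ := exists_rat_btwn (lt_add_one x)
    exact le_trans (hGle x q hq1) (hH1 q)
  have hGa : ∀ x, G x ≤ cdf a x := by
    intro x
    have hev : ∀ y, x < y → G x ≤ cdf a y := by
      intro y hy
      obtain ⟨q, h1, h2⟩ := exists_rat_btwn hy
      exact le_trans (hGle x q h1) (le_trans (hHa q) ((cdf a).mono h2.le))
    have hrc : Tendsto (cdf a) (nhdsWithin x (Ioi x)) (nhds (cdf a x)) :=
      ((cdf a).right_continuous x).tendsto.mono_left (nhdsWithin_mono x Ioi_subset_Ici_self)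
    exact ge_of_tendsto hrc (eventually_nhdsWithin_of_forall (fun y hy => hev y hy))
  have hGrc : ∀ x, ContinuousWithinAt G (Ici x) x := by
    intro x
    rw [Metric.continuousWithinAt_iff]
    intro ε hε
    have hlt : G x < G x + ε := by linarith
    obtain ⟨v, hvmem, hvlt⟩ := exists_lt_of_csInf_lt (hSne x) hlt
    obtain ⟨q, hxq, rfl⟩ := hvmem
    have hxq' : x < (q:ℝ) := hxq
    refine ⟨(q:ℝ) - x, by linarith, fun y hy hyd => ?_⟩
    rw [Real.dist_eq] at hyd
    have hyq : y < (q:ℝ) := by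
      have h := (abs_sub_lt_iff.mp hyd).1
      linarith
    have h1 : G y ≤ Hr q := hGle y q hyq
    have h2 : G x ≤ G y := hGmono hy
    rw [Real.dist_eq, abs_sub_lt_iff]
    constructor <;> linarith
  set Gs : StieltjesFunction ℝ := ⟨G, hGmono, hGrc⟩ with hGs
  have hbot : Tendsto G atBot (nhds 0) := by
    refine tendsto_of_tendsto_of_tendsto_of_le_of_le tendsto_const_nhds
      (tendsto_cdf_atBot a) hG0 hGa
  have htop : Tendsto G atTop (nhds 1) := by
    refine tendsto_of_tendsto_of_tendsto_of_le_of_le (tendsto_cdf_atTop b)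
      tendsto_const_nhds hGlb hG1
  set ν := Gs.measure with hν
  have hνIic : ∀ x, ν (Iic x) = ENNReal.ofReal (G x) := by
    intro x
    rw [hν, Gs.measure_Iic hbot]
    simp
    rfl
  haveI hνprob : IsProbabilityMeasure ν :=
    ⟨by rw [hν, Gs.measure_univ hbot htop]; norm_num⟩
  have hcdfν : ∀ x, cdf ν x = G x := by
    intro x
    rw [cdf_eq_real, measureReal_def, hνIic, ENNReal.toReal_ofReal (hG0 x)]
  have hνa : CdfLE a ν := fun x => by rw [hcdfν]; exact hGa x
  have hνb : CdfLE ν b := fun x => by rw [hcdfν]; exact hGlb x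
  have hν2 : ∫⁻ x, ENNReal.ofReal (x^2) ∂ν ≠ ⊤ := by
    refine ne_top_of_le_ne_top ?_ (lintegral_sq_le_of_sandwich hνa hνb)
    exact ENNReal.add_ne_top.mpr
      ⟨ENNReal.mul_ne_top (by norm_num) h2a, ENNReal.mul_ne_top (by norm_num) h2b⟩
  -- Stage 3: jump set of the limit quantile
  set Q : ℝ → ℝ := quant ν with hQdef
  set D : Set ℝ := {u | u ∈ Ioo (0:ℝ) 1 ∧ ∃ y, Q u < y ∧ ∀ v, v ∈ Ioo u (1:ℝ) → y ≤ Q v}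
    with hD
  have hDcount : D.Countable := by
    have key : ∀ u ∈ D, ∃ r : ℚ, Q u < (r:ℝ) ∧ ∀ v ∈ D, u < v → (r:ℝ) < Q v := by
      intro u hu
      obtain ⟨huIoo, y, hy1, hy2⟩ := hu
      obtain ⟨r, hr1, hr2⟩ := exists_rat_btwn hy1
      refine ⟨r, hr1, fun v hv huv => ?_⟩
      have hvIoo := hv.1
      have hyv : y ≤ Q v := hy2 v ⟨huv, hvIoo.2⟩
      linarith
    choose! F hF1 hF2 using key
    refine countable_of_injective_of_countable_image (f := F) ?_ (Set.to_countable _)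
    intro u hu v hv huv
    by_contra hne
    rcases lt_or_gt_of_ne hne with h | h
    · have h1 := hF2 u hu v hv h
      rw [huv] at h1
      exact absurd (hF1 v hv) (not_lt.mpr h1.le)
    · have h1 := hF2 v hv u hu h
      rw [← huv] at h1
      exact absurd (hF1 u hu) (not_lt.mpr h1.le)
  have hnotD : ∀ u ∈ Ioo (0:ℝ) 1, u ∉ D → ∀ y, Q u < y → ∃ v ∈ Ioo u (1:ℝ), Q v < y := by
    intro u hu hnD y hy
    by_contra hcon
    push_neg at hcon
    exact hnD ⟨hu, y, hy, fun v hv => hcon v hv⟩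
  -- Stage 4: quantile convergence off the jump set
  have hqconv : ∀ u ∈ Ioo (0:ℝ) 1, u ∉ D →
      Tendsto (fun n => quant (ρs (φ n)) u) atTop (nhds (Q u)) := by
    intro u hu hnD
    rw [tendsto_order]
    constructor
    · intro y hy
      obtain ⟨y', hy1, hy2⟩ := exists_between hy
      have hGy' : G y' < u := by
        by_contra hcon
        push_neg at hcon
        have hmem : y' ∈ {x | u ≤ cdf ν x} := by
          rw [mem_setOf, hcdfν]; exact hcon
        have : Q u ≤ y' := csInf_le (quant_set_bddBelow hu.1) hmem
        linarith
      obtain ⟨w, hwmem, hw⟩ := exists_lt_of_csInf_lt (hSne y') hGy'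
      obtain ⟨qr, hqr, rfl⟩ := hwmem
      have hqr' : y' < (qr:ℝ) := hqr
      have hev : ∀ᶠ n in atTop, cdf (ρs (φ n)) qr < u :=
        (hq qr).eventually (eventually_lt_nhds hw)
      filter_upwards [hev] with n hn
      by_contra hcon
      push_neg at hcon
      haveI := hρs (φ n)
      have hlt : quant (ρs (φ n)) u < (qr:ℝ) := lt_of_le_of_lt hcon (by linarith)
      obtain ⟨z, hz, hzq⟩ := (csInf_lt_iff (quant_set_bddBelow hu.1)
        (quant_set_nonempty hu.2)).mp hlt
      exact absurd (le_trans hz ((cdf _).mono hzq.le)) (not_le.mpr hn)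
    · intro y hy
      obtain ⟨y', hy1', hy2'⟩ := exists_between hy
      obtain ⟨v, hv, hQv⟩ := hnotD u hu hnD y' hy1'
      have hv0 : 0 < v := lt_trans hu.1 hv.1
      have hlt : sInf {x | v ≤ cdf ν x} < y' := hQv
      obtain ⟨x₀, hx₀mem, hx₀lt⟩ := (csInf_lt_iff (quant_set_bddBelow hv0)
        (quant_set_nonempty hv.2)).mp hlt
      obtain ⟨qr, hq1, hq2⟩ := exists_rat_btwn hx₀lt
      have hGx₀ : v ≤ G x₀ := by
        rw [mem_setOf, hcdfν] at hx₀mem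
        exact hx₀mem
      have hHrq : v ≤ Hr qr := le_trans hGx₀ (hGle x₀ qr hq1)
      have huv : u < v := hv.1
      have hev : ∀ᶠ n in atTop, u < cdf (ρs (φ n)) qr :=
        (hq qr).eventually (eventually_gt_nhds (lt_of_lt_of_le huv hHrq))
      filter_upwards [hev] with n hn
      haveI := hρs (φ n)
      have hle : quant (ρs (φ n)) u ≤ (qr:ℝ) :=
        csInf_le (quant_set_bddBelow hu.1) (le_of_lt hn)
      calc quant (ρs (φ n)) u ≤ (qr:ℝ) := hle
        _ < y' := hq2
        _ < y := hy2'
  -- Stage 5: dominated convergence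
  have hD0 : vol01 D = 0 := by
    have hv : volume D = 0 := hDcount.measure_zero _
    exact le_antisymm (le_trans (Measure.restrict_le_self _) hv.le) (zero_le)
  have haeD : ∀ᵐ u ∂vol01, u ∉ D := by
    rw [ae_iff]
    simpa [not_not] using hD0
  have haeconv : ∀ᵐ u ∂vol01, Tendsto
      (fun n => ENNReal.ofReal ((quantM (ρs (φ n)) u - quantM ν u)^2)) atTop
      (nhds ((fun _ : ℝ => (0:ℝ≥0∞)) u)) := by
    filter_upwards [vol01_ae_mem, haeD] with u hu hnD
    have h1 := hqconv u hu hnD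
    have h2 : Tendsto (fun n => quantM (ρs (φ n)) u) atTop (nhds (quantM ν u)) := by
      have he : ∀ n, quantM (ρs (φ n)) u = quant (ρs (φ n)) u := by
        intro n; rw [quantM, if_pos hu]
      have he2 : quantM ν u = Q u := by rw [quantM, if_pos hu, hQdef]
      simp only [he, he2]
      exact h1
    have h3 : Tendsto (fun n => (quantM (ρs (φ n)) u - quantM ν u)^2) atTop (nhds 0) := by
      have h4 := (h2.sub_const (quantM ν u)).pow 2
      simpa using h4
    have h5 := ENNReal.tendsto_ofReal h3
    simpa using h5
  set bound : ℝ → ℝ≥0∞ := fun u =>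
    8 * ENNReal.ofReal ((quantM a u)^2) + 8 * ENNReal.ofReal ((quantM b u)^2) with hbound
  have hbd : ∀ n, (fun u => ENNReal.ofReal ((quantM (ρs (φ n)) u - quantM ν u)^2))
      ≤ᵐ[vol01] bound := by
    intro n
    filter_upwards [vol01_ae_mem] with u hu
    haveI := hρs (φ n)
    have q1 : quantM a u ≤ quantM (ρs (φ n)) u := quantM_le_quantM (ha (φ n)) hu
    have q2 : quantM (ρs (φ n)) u ≤ quantM b u := quantM_le_quantM (hb (φ n)) hu
    have q3 : quantM a u ≤ quantM ν u := quantM_le_quantM hνa hu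
    have q4 : quantM ν u ≤ quantM b u := quantM_le_quantM hνb hu
    have hsq : (quantM (ρs (φ n)) u - quantM ν u)^2
        ≤ 8*(quantM a u)^2 + 8*(quantM b u)^2 := by
      nlinarith [sq_nonneg (quantM a u + quantM b u), sq_nonneg (quantM a u - quantM b u),
        sq_nonneg (quantM (ρs (φ n)) u - quantM ν u), sq_nonneg (quantM a u),
        sq_nonneg (quantM b u)]
    calc ENNReal.ofReal ((quantM (ρs (φ n)) u - quantM ν u)^2)
        ≤ ENNReal.ofReal (8*(quantM a u)^2 + 8*(quantM b u)^2) := ENNReal.ofReal_le_ofReal hsq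
      _ = bound u := by
          rw [hbound, ENNReal.ofReal_add (by positivity) (by positivity),
            ENNReal.ofReal_mul (by norm_num), ENNReal.ofReal_mul (by norm_num)]
          norm_num
  have hbint : ∫⁻ u, bound u ∂vol01 ≠ ⊤ := by
    rw [hbound, lintegral_add_left (((measurable_quantM.pow_const 2).ennreal_ofReal).const_mul 8),
      lintegral_const_mul 8 ((measurable_quantM.pow_const 2).ennreal_ofReal),
      lintegral_const_mul 8 ((measurable_quantM.pow_const 2).ennreal_ofReal),
      lintegral_sq_quantM, lintegral_sq_quantM]
    exact ENNReal.add_ne_top.mpr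
      ⟨ENNReal.mul_ne_top (by norm_num) h2a, ENNReal.mul_ne_top (by norm_num) h2b⟩
  have hdom := tendsto_lintegral_of_dominated_convergence (μ := vol01)
    (F := fun n u => ENNReal.ofReal ((quantM (ρs (φ n)) u - quantM ν u)^2))
    (f := fun _ => 0) bound
    (fun n => by
      haveI := hρs (φ n)
      exact ((measurable_quantM.sub measurable_quantM).pow_const 2).ennreal_ofReal)
    hbd hbint haeconv
  rw [lintegral_zero] at hdom
  -- Conclusion
  refine ⟨φ, ν, hφ, hνprob, hνa, hνb, hν2, ?_⟩
  rw [ENNReal.tendsto_nhds_zero]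
  intro ε hε
  rcases eq_or_ne ε ⊤ with rfl | hεtop
  · exact Eventually.of_forall (fun n => le_top)
  have hε2pos : (0:ℝ≥0∞) < ε ^ (2:ℝ) := ENNReal.rpow_pos hε hεtop
  have hev := (ENNReal.tendsto_nhds_zero.mp hdom) (ε ^ (2:ℝ)) hε2pos
  filter_upwards [hev] with n hn
  haveI := hρs (φ n)
  calc W2 (ρs (φ n)) ν ≤ qd (ρs (φ n)) ν := W2_le_qd
    _ ≤ (ε ^ (2:ℝ)) ^ ((1:ℝ)/2) := ENNReal.rpow_le_rpow hn (by norm_num)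
    _ = ε := by
        rw [← ENNReal.rpow_mul]
        norm_num




variable {P : ℝ → Measure ℝ → Measure ℝ} {K : Set (Measure ℝ)}

lemma P2_prob {μ : Measure ℝ} (h : μ ∈ P2) : IsProbabilityMeasure μ := h.1

lemma P2_m2 {μ : Measure ℝ} (h : μ ∈ P2) : ∫⁻ x, ENNReal.ofReal (x^2) ∂μ ≠ ⊤ := by
  haveI := h.1
  exact integrable_sq_iff.mp h.2

lemma mem_P2_of {μ : Measure ℝ} (h1 : IsProbabilityMeasure μ)
    (h2 : ∫⁻ x, ENNReal.ofReal (x^2) ∂μ ≠ ⊤) : μ ∈ P2 := by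
  haveI := h1
  exact ⟨h1, integrable_sq_iff.mpr h2⟩

/-- Sequential compactness of K (Helly + closedness). -/
lemma hellyK (hKP2 : K ⊆ P2)
    {a b : Measure ℝ} (haP2 : a ∈ P2) (hbP2 : b ∈ P2)
    (hab : ∀ μ ∈ K, StOrder a μ ∧ StOrder μ b)
    (hKcl : ∀ (ρ : ℕ → Measure ℝ) (ν : Measure ℝ), (∀ n, ρ n ∈ K) → ν ∈ P2 →
      W2Tendsto ρ ν → ν ∈ K)
    {κ : ℕ → Measure ℝ} (hκ : ∀ n, κ n ∈ K) :
    ∃ (φ : ℕ → ℕ) (γ : Measure ℝ), StrictMono φ ∧ γ ∈ K ∧ γ ∈ P2 ∧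
      Tendsto (fun n => W2 (κ (φ n)) γ) atTop (nhds 0) := by
  haveI := P2_prob haP2
  haveI := P2_prob hbP2
  have hprob : ∀ n, IsProbabilityMeasure (κ n) := fun n => P2_prob (hKP2 (hκ n))
  have ha' : ∀ n, CdfLE a (κ n) := by
    intro n
    haveI := hprob n
    exact cdfLE_of_stOrder (hab _ (hκ n)).1
  have hb' : ∀ n, CdfLE (κ n) b := by
    intro n
    haveI := hprob n
    exact cdfLE_of_stOrder (hab _ (hκ n)).2
  obtain ⟨φ, ν, hφ, hν1, -, -, hν2, hνconv⟩ :=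
    helly_selection hprob (P2_m2 haP2) (P2_m2 hbP2) ha' hb'
  have hν2' : ν ∈ P2 := mem_P2_of hν1 hν2
  exact ⟨φ, ν, hφ, hKcl _ ν (fun n => hκ (φ n)) hν2' hνconv, hν2', hνconv⟩

/-- From attraction: select elements of K tracking the orbit. -/
lemma attract_seq {B : Set (Measure ℝ)} (hattrB : Attracts P K B)
    {μK : Measure ℝ} (hμK : μK ∈ K)
    {μn : ℕ → Measure ℝ} (hμn : ∀ n, μn n ∈ B)
    {sn : ℕ → ℝ} (hsn : Tendsto sn atTop atTop) :
    ∃ κ : ℕ → Measure ℝ, (∀ n, κ n ∈ K) ∧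
      Tendsto (fun n => W2 (P (sn n) (μn n)) (κ n)) atTop (nhds 0) := by
  classical
  set d : ℕ → ℝ≥0∞ := fun n => ⨅ ν ∈ K, W2 (P (sn n) (μn n)) ν with hd
  have hdle : ∀ n, d n ≤ ⨆ μ ∈ B, ⨅ ν ∈ K, W2 (P (sn n) μ) ν := by
    intro n
    exact le_iSup₂ (f := fun μ (_ : μ ∈ B) => ⨅ ν ∈ K, W2 (P (sn n) μ) ν) (μn n) (hμn n)
  have hdconv : Tendsto d atTop (nhds 0) := by
    have hcomp := hattrB.comp hsn
    exact tendsto_of_tendsto_of_tendsto_of_le_of_le tendsto_const_nhds hcomp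
      (fun n => zero_le) hdle
  have hch : ∀ n, ∃ ν, ν ∈ K ∧ (d n ≠ ⊤ → W2 (P (sn n) (μn n)) ν < d n + ((n:ℝ≥0∞))⁻¹) := by
    intro n
    rcases eq_or_ne (d n) ⊤ with h | h
    · exact ⟨μK, hμK, fun h' => absurd h h'⟩
    · have hlt : d n < d n + ((n:ℝ≥0∞))⁻¹ :=
        ENNReal.lt_add_right h (by simp)
      rw [hd] at hlt
      obtain ⟨ν, hν⟩ := iInf_lt_iff.mp hlt
      obtain ⟨hνK, hν'⟩ := iInf_lt_iff.mp hν
      exact ⟨ν, hνK, fun _ => hν'⟩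
  choose κ hκ1 hκ2 using hch
  refine ⟨κ, hκ1, ?_⟩
  have hub : Tendsto (fun n => d n + ((n:ℝ≥0∞))⁻¹) atTop (nhds 0) := by
    have h2 : Tendsto (fun n : ℕ => ((n:ℝ≥0∞))⁻¹) atTop (nhds 0) :=
      ENNReal.tendsto_inv_nat_nhds_zero
    simpa using hdconv.add h2
  have hevfin : ∀ᶠ n in atTop, d n ≠ ⊤ := by
    have := (ENNReal.tendsto_nhds_zero.mp hdconv) 1 (by norm_num)
    filter_upwards [this] with n hn
    exact ne_top_of_le_ne_top (by norm_num) hn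
  refine tendsto_of_tendsto_of_tendsto_of_le_of_le' tendsto_const_nhds hub
    (Eventually.of_forall (fun n => zero_le)) ?_
  filter_upwards [hevfin] with n hn
  exact (hκ2 n hn).le

/-- Master asymptotic-compactness lemma. -/
lemma master (hsf : Semiflow P) (hKP2 : K ⊆ P2)
    {a b : Measure ℝ} (haP2 : a ∈ P2) (hbP2 : b ∈ P2)
    (hab : ∀ μ ∈ K, StOrder a μ ∧ StOrder μ b)
    (hKcl : ∀ (ρ : ℕ → Measure ℝ) (ν : Measure ℝ), (∀ n, ρ n ∈ K) → ν ∈ P2 →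
      W2Tendsto ρ ν → ν ∈ K)
    {B : Set (Measure ℝ)} (hBP2 : B ⊆ P2) (hattrB : Attracts P K B)
    {μK₀ : Measure ℝ} (hμK₀ : μK₀ ∈ K)
    {μn : ℕ → Measure ℝ} (hμn : ∀ n, μn n ∈ B)
    {sn : ℕ → ℝ} (hsn0 : ∀ n, 0 ≤ sn n) (hsn : Tendsto sn atTop atTop) :
    ∃ (φ : ℕ → ℕ) (γ : Measure ℝ), StrictMono φ ∧ γ ∈ K ∧ γ ∈ P2 ∧
      Tendsto (fun n => W2 (P (sn (φ n)) (μn (φ n))) γ) atTop (nhds 0) ∧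
      ∀ t, 0 ≤ t → γ ∈ P t '' K := by
  obtain ⟨κ, hκK, hκconv⟩ := attract_seq hattrB hμK₀ hμn hsn
  obtain ⟨φ, γ, hφ, hγK, hγ2, hγconv⟩ := hellyK hKP2 haP2 hbP2 hab hKcl hκK
  haveI := P2_prob hγ2
  have hxprob : ∀ n, IsProbabilityMeasure (P (sn n) (μn n)) :=
    fun n => P2_prob (hsf.1 _ (hsn0 n) _ (hBP2 (hμn n)))
  have hκprob : ∀ n, IsProbabilityMeasure (κ n) := fun n => P2_prob (hKP2 (hκK n))
  have hxγ : Tendsto (fun n => W2 (P (sn (φ n)) (μn (φ n))) γ) atTop (nhds 0) := by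
    have hsum : Tendsto (fun n => W2 (P (sn (φ n)) (μn (φ n))) (κ (φ n)) + W2 (κ (φ n)) γ)
        atTop (nhds 0) := by
      have h1 := hκconv.comp hφ.tendsto_atTop
      simpa using h1.add hγconv
    refine tendsto_of_tendsto_of_tendsto_of_le_of_le tendsto_const_nhds hsum
      (fun n => zero_le) (fun n => ?_)
    haveI := hxprob (φ n); haveI := hκprob (φ n)
    exact W2_triangle
  refine ⟨φ, γ, hφ, hγK, hγ2, hxγ, ?_⟩
  intro t ht
  have hsnφ : Tendsto (fun n => sn (φ n)) atTop atTop := hsn.comp hφ.tendsto_atTop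
  obtain ⟨N₀, hN₀⟩ := eventually_atTop.mp (hsnφ.eventually_ge_atTop t)
  set s' : ℕ → ℝ := fun m => sn (φ (m + N₀)) - t with hs'
  have hs'0 : ∀ m, 0 ≤ s' m := by
    intro m
    have := hN₀ (m + N₀) (Nat.le_add_left _ _)
    simp only [hs', sub_nonneg]
    exact this
  have hs'top : Tendsto s' atTop atTop := by
    have hcomp : Tendsto (fun m : ℕ => sn (φ (m + N₀))) atTop atTop :=
      hsnφ.comp (tendsto_add_atTop_nat N₀)
    have := tendsto_atTop_add_const_right atTop (-t) hcomp
    simpa [hs', sub_eq_add_neg] using this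
  obtain ⟨κ', hκ'K, hκ'conv⟩ := attract_seq hattrB hμK₀ (fun m => hμn (φ (m + N₀))) hs'top
  obtain ⟨ψ, η, hψ, hηK, hη2, hηconv⟩ := hellyK hKP2 haP2 hbP2 hab hKcl hκ'K
  haveI := P2_prob hη2
  have hyP2 : ∀ m, P (s' m) (μn (φ (m + N₀))) ∈ P2 :=
    fun m => hsf.1 _ (hs'0 m) _ (hBP2 (hμn _))
  have hyprob : ∀ m, IsProbabilityMeasure (P (s' m) (μn (φ (m + N₀)))) :=
    fun m => P2_prob (hyP2 m)
  have hyη : Tendsto (fun m => W2 (P (s' (ψ m)) (μn (φ (ψ m + N₀)))) η) atTop (nhds 0) := by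
    have hsum : Tendsto (fun m => W2 (P (s' (ψ m)) (μn (φ (ψ m + N₀)))) (κ' (ψ m))
        + W2 (κ' (ψ m)) η) atTop (nhds 0) := by
      have h1 := hκ'conv.comp hψ.tendsto_atTop
      simpa using h1.add hηconv
    refine tendsto_of_tendsto_of_tendsto_of_le_of_le tendsto_const_nhds hsum
      (fun m => zero_le) (fun m => ?_)
    haveI := hyprob (ψ m); haveI := P2_prob (hKP2 (hκ'K (ψ m)))
    exact W2_triangle
  have hcont := hsf.2.2.2 (fun _ => t) t (fun m => P (s' (ψ m)) (μn (φ (ψ m + N₀)))) η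
    (fun _ => ht) ht tendsto_const_nhds (fun m => hyP2 (ψ m)) (hKP2 hηK) hyη
  have hsemig : ∀ m, P t (P (s' (ψ m)) (μn (φ (ψ m + N₀))))
      = P (sn (φ (ψ m + N₀))) (μn (φ (ψ m + N₀))) := by
    intro m
    rw [hsf.2.2.1 t (s' (ψ m)) ht (hs'0 (ψ m)) _ (hBP2 (hμn _))]
    congr 1
    simp only [hs']
    ring
  have hsub : Tendsto (fun m => W2 (P (sn (φ (ψ m + N₀))) (μn (φ (ψ m + N₀)))) γ)
      atTop (nhds 0) := by
    have hcomp : Tendsto (fun m => φ (ψ m + N₀)) atTop atTop :=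
      hφ.tendsto_atTop.comp ((tendsto_add_atTop_nat N₀).comp hψ.tendsto_atTop)
    have : Tendsto (fun m => ψ m + N₀) atTop atTop :=
      (tendsto_add_atTop_nat N₀).comp hψ.tendsto_atTop
    exact hxγ.comp this
  have hPtη2 : P t η ∈ P2 := hsf.1 t ht η (hKP2 hηK)
  haveI := P2_prob hPtη2
  have hcont' : Tendsto (fun m => W2 (P (sn (φ (ψ m + N₀))) (μn (φ (ψ m + N₀)))) (P t η))
      atTop (nhds 0) := by
    have heq : (fun m => W2 (P (sn (φ (ψ m + N₀))) (μn (φ (ψ m + N₀)))) (P t η))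
        = (fun m => W2 (P t (P (s' (ψ m)) (μn (φ (ψ m + N₀))))) (P t η)) := by
      funext m
      rw [hsemig]
    rw [heq]
    exact hcont
  have huniq : γ = P t η :=
    W2_limit_unique (fun m => hxprob (φ (ψ m + N₀))) hsub hcont'
  exact ⟨η, hηK, huniq.symm⟩


end GA

open GA ProbabilityTheory

/-- If an order-preserving semiflow `P*` on `𝒫₂(ℝ)` has an eventually
positively invariant, order bounded, closed set `K` attracting every bounded set, then
`ω(K) = ⋂_{t≥0} P*ₜ K` is the global attractor (compact, invariant, attracting every
bounded set), and there are invariant measures `ν̲ = inf ω(K)` and `ν̄ = sup ω(K)`,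
both in `ω(K)`, with `ω(K) ⊆ [ν̲, ν̄]`. -/
theorem global_attractor_structure (P : ℝ → Measure ℝ → Measure ℝ)
    (hsf : Semiflow P) (hop : OrderPreserving P)
    (K : Set (Measure ℝ)) (hKP2 : K ⊆ P2)
    (hKepi : ∃ t₀ : ℝ, 0 ≤ t₀ ∧ ∀ t : ℝ, t₀ ≤ t → ∀ μ ∈ K, P t μ ∈ K)
    (hKob : ∃ a ∈ P2, ∃ b ∈ P2, ∀ μ ∈ K, StOrder a μ ∧ StOrder μ b)
    (hKcl : ∀ (ρ : ℕ → Measure ℝ) (ν : Measure ℝ), (∀ n, ρ n ∈ K) → ν ∈ P2 →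
      W2Tendsto ρ ν → ν ∈ K)
    (hattr : ∀ B ⊆ P2, BoundedSet B → Attracts P K B) :
    (OmegaLimit P K = ⋂ t ∈ Set.Ici (0:ℝ), P t '' K) ∧
    SeqCompact (OmegaLimit P K) ∧
    InvariantSet P (OmegaLimit P K) ∧
    (∀ B ⊆ P2, BoundedSet B → Attracts P (OmegaLimit P K) B) ∧
    ∃ νlo ∈ OmegaLimit P K, ∃ νhi ∈ OmegaLimit P K,
      Invariant P νlo ∧ Invariant P νhi ∧
      (∀ ρ ∈ OmegaLimit P K, StOrder νlo ρ ∧ StOrder ρ νhi) ∧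
      (∀ l ∈ P2, (∀ ρ ∈ OmegaLimit P K, StOrder l ρ) → StOrder l νlo) ∧
      (∀ u ∈ P2, (∀ ρ ∈ OmegaLimit P K, StOrder ρ u) → StOrder νhi u) := by
  classical
  obtain ⟨a, haP2, b, hbP2, hab⟩ := hKob
  haveI := P2_prob haP2
  haveI := P2_prob hbP2
  -- dirac 0 is in P2
  have hδ2 : Measure.dirac (0:ℝ) ∈ P2 := by
    refine mem_P2_of (by infer_instance) ?_
    rw [lintegral_dirac]
    simp
  -- K is nonempty
  have hKne : K.Nonempty := by
    by_contra hemp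
    rw [not_nonempty_iff_eq_empty] at hemp
    have hBsub : ({Measure.dirac 0} : Set (Measure ℝ)) ⊆ P2 := by
      rw [singleton_subset_iff]; exact hδ2
    have hBbdd : BoundedSet ({Measure.dirac 0} : Set (Measure ℝ)) := by
      refine ⟨1, by norm_num, ?_⟩
      intro μ hμ
      rw [mem_singleton_iff] at hμ
      subst hμ
      haveI := P2_prob hδ2
      rw [W2_self]
      exact zero_le
    have hB := hattr _ hBsub hBbdd
    have hval : ∀ t : ℝ,
        (⨆ μ ∈ ({Measure.dirac 0} : Set (Measure ℝ)), ⨅ ν ∈ K, W2 (P t μ) ν) = ⊤ := by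
      intro t
      rw [hemp]
      simp
    have hev := (ENNReal.tendsto_nhds_zero.mp hB) 1 (by norm_num)
    obtain ⟨T, hT⟩ := eventually_atTop.mp hev
    have := hT T le_rfl
    rw [hval] at this
    simp at this
  obtain ⟨μK₀, hμK₀⟩ := hKne
  -- K is bounded
  have hKbdd : BoundedSet K := by
    refine ⟨(2 * ∫⁻ x, ENNReal.ofReal (x^2) ∂a + 2 * ∫⁻ x, ENNReal.ofReal (x^2) ∂b)
      ^ (1/2:ℝ), ?_, ?_⟩
    · apply ENNReal.rpow_lt_top_of_nonneg (by norm_num)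
      exact ENNReal.add_ne_top.mpr ⟨ENNReal.mul_ne_top (by norm_num) (P2_m2 haP2),
        ENNReal.mul_ne_top (by norm_num) (P2_m2 hbP2)⟩
    · intro μ hμ
      haveI := P2_prob (hKP2 hμ)
      refine le_trans W2_dirac_bound (ENNReal.rpow_le_rpow ?_ (by norm_num))
      exact lintegral_sq_le_of_sandwich (cdfLE_of_stOrder (hab μ hμ).1)
        (cdfLE_of_stOrder (hab μ hμ).2)
  have masterB : ∀ {B : Set (Measure ℝ)}, B ⊆ P2 → BoundedSet B →
      ∀ {μn : ℕ → Measure ℝ}, (∀ n, μn n ∈ B) →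
      ∀ {sn : ℕ → ℝ}, (∀ n, 0 ≤ sn n) → Tendsto sn atTop atTop →
      ∃ (φ : ℕ → ℕ) (γ : Measure ℝ), StrictMono φ ∧ γ ∈ K ∧ γ ∈ P2 ∧
        Tendsto (fun n => W2 (P (sn (φ n)) (μn (φ n))) γ) atTop (nhds 0) ∧
        ∀ t, 0 ≤ t → γ ∈ P t '' K := by
    intro B hBP2 hBb μn hμn sn hsn0 hsn
    exact master hsf hKP2 haP2 hbP2 hab hKcl hBP2 (hattr B hBP2 hBb) hμK₀ hμn hsn0 hsn
  -- Part 1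
  have part1 : OmegaLimit P K = ⋂ t ∈ Set.Ici (0:ℝ), P t '' K := by
    apply Set.Subset.antisymm
    · rintro ν ⟨hν2, ts, μs, hμsK, hts, hconv⟩
      refine mem_iInter₂.mpr (fun t ht => ?_)
      obtain ⟨N₀, hN₀⟩ := eventually_atTop.mp (hts.eventually_ge_atTop 0)
      have hsn'0 : ∀ m : ℕ, 0 ≤ ts (m + N₀) := fun m => hN₀ _ (Nat.le_add_left _ _)
      have hsn't : Tendsto (fun m : ℕ => ts (m + N₀)) atTop atTop :=
        hts.comp (tendsto_add_atTop_nat N₀)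
      obtain ⟨φ, γ, hφ, hγK, hγ2, hγconv, hγim⟩ :=
        masterB hKP2 hKbdd (fun m : ℕ => hμsK (m + N₀)) hsn'0 hsn't
      have hconv' : Tendsto (fun m => W2 (P (ts (φ m + N₀)) (μs (φ m + N₀))) ν)
          atTop (nhds 0) :=
        hconv.comp ((tendsto_add_atTop_nat N₀).comp hφ.tendsto_atTop)
      haveI := P2_prob hν2
      haveI := P2_prob hγ2
      have hxprob : ∀ m, IsProbabilityMeasure (P (ts (φ m + N₀)) (μs (φ m + N₀))) :=
        fun m => P2_prob (hsf.1 _ (hsn'0 (φ m)) _ (hKP2 (hμsK _)))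
      have hνγ : ν = γ := W2_limit_unique hxprob hconv' hγconv
      rw [hνγ]
      exact hγim t (mem_Ici.mp ht)
    · intro ν hν
      rw [mem_iInter₂] at hν
      have hνK : ν ∈ K := by
        obtain ⟨μ, hμK, hμeq⟩ := hν 0 (mem_Ici.mpr le_rfl)
        rw [hsf.2.1 μ (hKP2 hμK)] at hμeq
        rw [← hμeq]; exact hμK
      have hν2 : ν ∈ P2 := hKP2 hνK
      haveI := P2_prob hν2
      have hsel : ∀ n : ℕ, ∃ μ ∈ K, P ((n:ℝ)) μ = ν :=
        fun n => hν (n:ℝ) (mem_Ici.mpr (Nat.cast_nonneg n))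
      choose μsel hμsel1 hμsel2 using hsel
      refine ⟨hν2, (fun n : ℕ => (n:ℝ)), μsel, hμsel1, tendsto_natCast_atTop_atTop, ?_⟩
      simp only [hμsel2, W2_self]
      exact tendsto_const_nhds
  have hΩsubK : OmegaLimit P K ⊆ K := by
    rw [part1]
    intro ν hν
    rw [mem_iInter₂] at hν
    obtain ⟨μ, hμK, hμeq⟩ := hν 0 (mem_Ici.mpr le_rfl)
    rw [hsf.2.1 μ (hKP2 hμK)] at hμeq
    rw [← hμeq]; exact hμK
  have hΩP2 : OmegaLimit P K ⊆ P2 := fun ν hν => hKP2 (hΩsubK hν)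
  -- a reusable "closedness under P t images" step
  have imstep : ∀ (t : ℝ), 0 ≤ t → ∀ (γ : Measure ℝ), γ ∈ P2 →
      ∀ (zs : ℕ → Measure ℝ), (∀ n, zs n ∈ K) →
      Tendsto (fun n => W2 (P t (zs n)) γ) atTop (nhds 0) → γ ∈ P t '' K := by
    intro t ht γ hγ2 zs hzsK hzconv
    obtain ⟨ψ, η, hψ, hηK, hη2, hηconv⟩ := hellyK hKP2 haP2 hbP2 hab hKcl hzsK
    haveI := P2_prob hη2
    haveI := P2_prob hγ2
    have hcont := hsf.2.2.2 (fun _ => t) t (fun m => zs (ψ m)) η (fun _ => ht) ht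
      tendsto_const_nhds (fun m => hKP2 (hzsK (ψ m))) (hKP2 hηK) hηconv
    have hPtη2 : P t η ∈ P2 := hsf.1 t ht η (hKP2 hηK)
    haveI := P2_prob hPtη2
    have hxprob : ∀ m, IsProbabilityMeasure (P t (zs (ψ m))) :=
      fun m => P2_prob (hsf.1 t ht _ (hKP2 (hzsK (ψ m))))
    have hsub : Tendsto (fun m => W2 (P t (zs (ψ m))) γ) atTop (nhds 0) :=
      hzconv.comp hψ.tendsto_atTop
    have : γ = P t η := W2_limit_unique hxprob hsub hcont
    exact ⟨η, hηK, this.symm⟩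
  -- Part 2
  have part2 : SeqCompact (OmegaLimit P K) := by
    intro ρ hρ
    obtain ⟨φ, γ, hφ, hγK, hγ2, hγconv⟩ :=
      hellyK hKP2 haP2 hbP2 hab hKcl (fun n => hΩsubK (hρ n))
    refine ⟨φ, γ, hφ, ?_, hγconv⟩
    rw [part1]
    refine mem_iInter₂.mpr (fun t ht => ?_)
    have ht' : (0:ℝ) ≤ t := mem_Ici.mp ht
    have hsel : ∀ n, ∃ z ∈ K, P t z = ρ (φ n) := by
      intro n
      have h := hρ (φ n)
      rw [part1, mem_iInter₂] at h
      exact h t ht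
    choose zs hzsK hzs using hsel
    refine imstep t ht' γ hγ2 zs hzsK ?_
    have : (fun n => W2 (P t (zs n)) γ) = fun n => W2 (ρ (φ n)) γ := by
      funext n
      rw [hzs n]
    rw [this]
    exact hγconv
  -- Part 3
  have part3 : InvariantSet P (OmegaLimit P K) := by
    intro t ht
    apply Set.Subset.antisymm
    · rintro x ⟨ρ, hρΩ, rfl⟩
      obtain ⟨hρ2, ts, μs, hμsK, hts, hconv⟩ := hρΩ
      obtain ⟨N₀, hN₀⟩ := eventually_atTop.mp (hts.eventually_ge_atTop 0)
      have hts0 : ∀ m : ℕ, 0 ≤ ts (m + N₀) := fun m => hN₀ _ (Nat.le_add_left _ _)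
      have hP2' : ∀ m, P (ts (m + N₀)) (μs (m + N₀)) ∈ P2 :=
        fun m => hsf.1 _ (hts0 m) _ (hKP2 (hμsK _))
      have hconv' : W2Tendsto (fun m => P (ts (m + N₀)) (μs (m + N₀))) ρ :=
        hconv.comp (tendsto_add_atTop_nat N₀)
      have hcont := hsf.2.2.2 (fun _ => t) t (fun m => P (ts (m + N₀)) (μs (m + N₀))) ρ
        (fun _ => ht) ht tendsto_const_nhds hP2' hρ2 hconv'
      refine ⟨hsf.1 t ht ρ hρ2, (fun m => t + ts (m + N₀)), (fun m => μs (m + N₀)),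
        (fun m => hμsK _), ?_, ?_⟩
      · exact tendsto_atTop_add_const_left atTop t (hts.comp (tendsto_add_atTop_nat N₀))
      · have heq : ∀ m, P (t + ts (m + N₀)) (μs (m + N₀))
            = P t (P (ts (m + N₀)) (μs (m + N₀))) :=
          fun m => (hsf.2.2.1 t (ts (m + N₀)) ht (hts0 m) _ (hKP2 (hμsK _))).symm
        simp only [heq]
        exact hcont
    · intro ρ hρΩ
      obtain ⟨hρ2, ts, μs, hμsK, hts, hconv⟩ := hρΩ
      obtain ⟨N₀, hN₀⟩ := eventually_atTop.mp (hts.eventually_ge_atTop t)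
      have hsn'0 : ∀ m : ℕ, 0 ≤ ts (m + N₀) - t := by
        intro m
        have := hN₀ (m + N₀) (Nat.le_add_left _ _)
        linarith
      have hsn't : Tendsto (fun m : ℕ => ts (m + N₀) - t) atTop atTop := by
        have h1 := tendsto_atTop_add_const_right atTop (-t)
          (hts.comp (tendsto_add_atTop_nat N₀))
        simpa [sub_eq_add_neg] using h1
      obtain ⟨φ, η, hφ, hηK, hη2, hηconv, hηim⟩ :=
        masterB hKP2 hKbdd (fun m : ℕ => hμsK (m + N₀)) hsn'0 hsn't
      have hηΩ : η ∈ OmegaLimit P K := by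
        rw [part1]
        exact mem_iInter₂.mpr (fun s hs => hηim s (mem_Ici.mp hs))
      refine ⟨η, hηΩ, ?_⟩
      haveI := P2_prob hη2
      haveI := P2_prob hρ2
      have hyP2 : ∀ m, P (ts (φ m + N₀) - t) (μs (φ m + N₀)) ∈ P2 :=
        fun m => hsf.1 _ (hsn'0 (φ m)) _ (hKP2 (hμsK _))
      have hcont := hsf.2.2.2 (fun _ => t) t
        (fun m => P (ts (φ m + N₀) - t) (μs (φ m + N₀))) η
        (fun _ => ht) ht tendsto_const_nhds hyP2 (hKP2 hηK) hηconv
      have heq : ∀ m, P t (P (ts (φ m + N₀) - t) (μs (φ m + N₀)))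
          = P (ts (φ m + N₀)) (μs (φ m + N₀)) := by
        intro m
        rw [hsf.2.2.1 t (ts (φ m + N₀) - t) ht (hsn'0 (φ m)) _ (hKP2 (hμsK _))]
        congr 1
        ring
      have hcont' : Tendsto (fun m => W2 (P (ts (φ m + N₀)) (μs (φ m + N₀))) (P t η))
          atTop (nhds 0) := by
        simp only [← heq]
        exact hcont
      have hconvρ : Tendsto (fun m => W2 (P (ts (φ m + N₀)) (μs (φ m + N₀))) ρ)
          atTop (nhds 0) :=
        hconv.comp ((tendsto_add_atTop_nat N₀).comp hφ.tendsto_atTop)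
      have hxprob : ∀ m, IsProbabilityMeasure (P (ts (φ m + N₀)) (μs (φ m + N₀))) := by
        intro m
        rw [← heq m]
        exact P2_prob (hsf.1 t ht _ (hyP2 m))
      haveI := P2_prob (hsf.1 t ht η (hKP2 hηK))
      exact W2_limit_unique hxprob hcont' hconvρ
  -- Part 4
  have part4 : ∀ B, B ⊆ P2 → BoundedSet B → Attracts P (OmegaLimit P K) B := by
    intro B hBP2 hBb
    by_contra hcon
    rw [Attracts, ENNReal.tendsto_nhds_zero] at hcon
    push_neg at hcon
    obtain ⟨ε, hε, hfreq⟩ := hcon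
    have hsel : ∀ m : ℕ, ∃ t : ℝ, (m:ℝ) ≤ t ∧
        ε < ⨆ μ ∈ B, ⨅ ν ∈ OmegaLimit P K, W2 (P t μ) ν := by
      intro m
      obtain ⟨t, htm, hval⟩ := frequently_atTop.mp hfreq (m:ℝ)
      exact ⟨t, htm, hval⟩
    choose tsq htsq1 htsq2 using hsel
    have hsel2 : ∀ m, ∃ μ, μ ∈ B ∧ ε < ⨅ ν ∈ OmegaLimit P K, W2 (P (tsq m) μ) ν := by
      intro m
      obtain ⟨μ, hμ⟩ := lt_iSup_iff.mp (htsq2 m)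
      obtain ⟨hμB, h⟩ := lt_iSup_iff.mp hμ
      exact ⟨μ, hμB, h⟩
    choose μm hμmB hμmε using hsel2
    have htst : Tendsto tsq atTop atTop :=
      tendsto_atTop_mono htsq1 tendsto_natCast_atTop_atTop
    have hts0 : ∀ m, 0 ≤ tsq m := fun m => le_trans (Nat.cast_nonneg m) (htsq1 m)
    obtain ⟨φ, γ, hφ, hγK, hγ2, hγconv, hγim⟩ := masterB hBP2 hBb hμmB hts0 htst
    have hγΩ : γ ∈ OmegaLimit P K := by
      rw [part1]
      exact mem_iInter₂.mpr (fun s hs => hγim s (mem_Ici.mp hs))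
    have hle : ∀ m, (⨅ ν ∈ OmegaLimit P K, W2 (P (tsq (φ m)) (μm (φ m))) ν)
        ≤ W2 (P (tsq (φ m)) (μm (φ m))) γ := fun m => iInf₂_le γ hγΩ
    obtain ⟨m, hm⟩ := ((ENNReal.tendsto_nhds_zero.mp hγconv) ε hε).exists
    exact absurd (lt_of_lt_of_le (hμmε (φ m)) (hle m)) (not_lt.mpr hm)
  -- Part 5 : extremal invariant measures
  -- upper one from the orbit of b
  have hbB : ({b} : Set (Measure ℝ)) ⊆ P2 := by
    rw [singleton_subset_iff]; exact hbP2
  have hbBb : BoundedSet ({b} : Set (Measure ℝ)) := by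
    refine ⟨(∫⁻ x, ENNReal.ofReal (x^2) ∂b) ^ (1/2:ℝ),
      ENNReal.rpow_lt_top_of_nonneg (by norm_num) (P2_m2 hbP2), ?_⟩
    intro μ hμ
    rw [mem_singleton_iff] at hμ
    subst hμ
    exact W2_dirac_bound
  obtain ⟨φb, γb, hφb, hγbK, hγb2, hγbconv, hγbim⟩ :=
    masterB hbB hbBb (μn := fun _ : ℕ => b) (fun _ => rfl)
      (sn := fun n : ℕ => (n:ℝ)) (fun n => Nat.cast_nonneg n) tendsto_natCast_atTop_atTop
  have hγbΩ : γb ∈ OmegaLimit P K := by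
    rw [part1]
    exact mem_iInter₂.mpr (fun s hs => hγbim s (mem_Ici.mp hs))
  have haB : ({a} : Set (Measure ℝ)) ⊆ P2 := by
    rw [singleton_subset_iff]; exact haP2
  have haBb : BoundedSet ({a} : Set (Measure ℝ)) := by
    refine ⟨(∫⁻ x, ENNReal.ofReal (x^2) ∂a) ^ (1/2:ℝ),
      ENNReal.rpow_lt_top_of_nonneg (by norm_num) (P2_m2 haP2), ?_⟩
    intro μ hμ
    rw [mem_singleton_iff] at hμ
    subst hμ
    exact W2_dirac_bound
  obtain ⟨φa, γa, hφa, hγaK, hγa2, hγaconv, hγaim⟩ :=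
    masterB haB haBb (μn := fun _ : ℕ => a) (fun _ => rfl)
      (sn := fun n : ℕ => (n:ℝ)) (fun n => Nat.cast_nonneg n) tendsto_natCast_atTop_atTop
  have hγaΩ : γa ∈ OmegaLimit P K := by
    rw [part1]
    exact mem_iInter₂.mpr (fun s hs => hγaim s (mem_Ici.mp hs))
  -- dominance
  have hdom_hi : ∀ ρ ∈ OmegaLimit P K, StOrder ρ γb := by
    intro ρ hρΩ
    have hρ2 := hΩP2 hρΩ
    haveI := P2_prob hρ2
    haveI := P2_prob hγb2
    have hord : ∀ n, CdfLE ρ (P ((φb n : ℕ) : ℝ) b) := by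
      intro n
      have hs0 : (0:ℝ) ≤ ((φb n : ℕ):ℝ) := Nat.cast_nonneg _
      have hρmem : ρ ∈ P (((φb n : ℕ)):ℝ) '' OmegaLimit P K := by
        rw [part3 _ hs0]
        exact hρΩ
      obtain ⟨ρ', hρ'Ω, hρ'eq⟩ := hρmem
      have hρ'K := hΩsubK hρ'Ω
      have hso : StOrder ρ' b := (hab ρ' hρ'K).2
      have hPso := hop _ hs0 ρ' b (hKP2 hρ'K) hbP2 hso
      rw [hρ'eq] at hPso
      haveI := P2_prob (hsf.1 _ hs0 b hbP2)
      exact cdfLE_of_stOrder hPso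
    have hProb : ∀ n, IsProbabilityMeasure (P ((φb n : ℕ):ℝ) b) :=
      fun n => P2_prob (hsf.1 _ (Nat.cast_nonneg _) b hbP2)
    exact stOrder_of_cdfLE (cdfLE_of_tendsto hProb hγbconv hord)
  have hdom_lo : ∀ ρ ∈ OmegaLimit P K, StOrder γa ρ := by
    intro ρ hρΩ
    have hρ2 := hΩP2 hρΩ
    haveI := P2_prob hρ2
    haveI := P2_prob hγa2
    have hord : ∀ n, CdfLE (P ((φa n : ℕ) : ℝ) a) ρ := by
      intro n
      have hs0 : (0:ℝ) ≤ ((φa n : ℕ):ℝ) := Nat.cast_nonneg _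
      have hρmem : ρ ∈ P (((φa n : ℕ)):ℝ) '' OmegaLimit P K := by
        rw [part3 _ hs0]
        exact hρΩ
      obtain ⟨ρ', hρ'Ω, hρ'eq⟩ := hρmem
      have hρ'K := hΩsubK hρ'Ω
      have hso : StOrder a ρ' := (hab ρ' hρ'K).1
      have hPso := hop _ hs0 a ρ' haP2 (hKP2 hρ'K) hso
      rw [hρ'eq] at hPso
      haveI := P2_prob (hsf.1 _ hs0 a haP2)
      exact cdfLE_of_stOrder hPso
    have hProb : ∀ n, IsProbabilityMeasure (P ((φa n : ℕ):ℝ) a) :=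
      fun n => P2_prob (hsf.1 _ (Nat.cast_nonneg _) a haP2)
    exact stOrder_of_cdfLE (cdfLE_of_tendsto' hProb hγaconv hord)
  -- invariance
  have hinv_hi : Invariant P γb := by
    intro t ht
    have h1 : P t γb ∈ OmegaLimit P K := by
      rw [← part3 t ht]
      exact ⟨γb, hγbΩ, rfl⟩
    have h2 : StOrder (P t γb) γb := hdom_hi _ h1
    have hmem : γb ∈ P t '' OmegaLimit P K := by
      rw [part3 t ht]
      exact hγbΩ
    obtain ⟨γ', hγ'Ω, hγ'eq⟩ := hmem
    have h3 : StOrder γ' γb := hdom_hi _ hγ'Ω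
    have h4 := hop t ht γ' γb (hΩP2 hγ'Ω) (hΩP2 hγbΩ) h3
    rw [hγ'eq] at h4
    haveI := P2_prob (hΩP2 h1)
    haveI := P2_prob hγb2
    exact stOrder_antisymm h2 h4
  have hinv_lo : Invariant P γa := by
    intro t ht
    have h1 : P t γa ∈ OmegaLimit P K := by
      rw [← part3 t ht]
      exact ⟨γa, hγaΩ, rfl⟩
    have h2 : StOrder γa (P t γa) := hdom_lo _ h1
    have hmem : γa ∈ P t '' OmegaLimit P K := by
      rw [part3 t ht]
      exact hγaΩ
    obtain ⟨γ', hγ'Ω, hγ'eq⟩ := hmem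
    have h3 : StOrder γa γ' := hdom_lo _ hγ'Ω
    have h4 := hop t ht γa γ' (hΩP2 hγaΩ) (hΩP2 hγ'Ω) h3
    rw [hγ'eq] at h4
    haveI := P2_prob (hΩP2 h1)
    haveI := P2_prob hγa2
    exact stOrder_antisymm h4 h2
  exact ⟨part1, part2, part3, part4, γa, hγaΩ, γb, hγbΩ, hinv_lo, hinv_hi,
    (fun ρ hρ => ⟨hdom_lo ρ hρ, hdom_hi ρ hρ⟩),
    (fun l _ hlall => hlall γa hγaΩ),
    (fun u _ huall => huall γb hγbΩ)⟩
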